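/- arXiv:1012.0957 — 5 statements merged into one kernel-verified Lean document; each statement's English description precedes it below -/
import Mathlib

section
/- Let M be a vector space over ℂ, let q ∈ ℂ[s,s⁻¹], and let D be the derivation of ℂ[s,s⁻¹] given by D(u) = q·(du/ds). Let S(x) = Σ_i S_{(i)} x^i ∈ (End_ℂ M)((x)) be such that: (i) S(x) is invertible in the ring (End_ℂ M)((x)); (ii) S_{(i)}S_{(j)} = S_{(j)}S_{(i)} for all integers i, j; and (iii) dS(x)/dx = q(S(x)), where q(S(x)) denotes the evaluation of the Laurent polynomial q at the unit S(x). Then there is a unique ℂ-algebra homomorphism Y : ℂ[s,s⁻¹] → (End_ℂ M)((x)) with Y(s) = S(x); it is given by Y(u) = u(S(x)), and it satisfies Y(D u) = d/dx (Y(u)) for every u ∈ ℂ[s,s⁻¹]. -/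
/-- Formal derivative of a Laurent series. -/
noncomputable def lsDeriv {A : Type*} [Ring A] (f : LaurentSeries A) : LaurentSeries A where
  coeff k := (k + 1) • f.coeff (k + 1)
  isPWO_support' := by
    refine (f.isPWO_support.image_of_monotone
      (f := fun m : ℤ => m - 1) (fun a b h => by simpa using h)).mono ?_
    intro k hk
    have hk' : f.coeff (k + 1) ≠ 0 := by
      intro h
      simp [Function.mem_support, h] at hk
    exact ⟨k + 1, hk', by ring⟩

/-- The formal derivative `du/ds` of a Laurent polynomial `u = ∑ cₙ sⁿ`. -/
noncomputable def lpDeriv (u : LaurentPolynomial ℂ) : LaurentPolynomial ℂ :=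
  Finsupp.sum u.coeff fun n c => ((n : ℂ) * c) • LaurentPolynomial.T (n - 1)

/-- Evaluation of a Laurent polynomial `u = ∑ cₙ sⁿ ∈ ℂ[s,s⁻¹]` at a unit `U` of a
ℂ-algebra `A`, namely `u(U) = ∑ cₙ • Uⁿ` (with `Uⁿ` the integer power in `Aˣ`). -/
noncomputable def evalLP {A : Type*} [Ring A] [Algebra ℂ A]
    (u : LaurentPolynomial ℂ) (U : Aˣ) : A :=
  Finsupp.sum u.coeff fun n c => c • (((U ^ n : Aˣ) : A))

open Finset

section Aux
variable {A : Type*} [Ring A]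

theorem lsDeriv_coeff (f : LaurentSeries A) (k : ℤ) :
    (lsDeriv f).coeff k = (k + 1) • f.coeff (k + 1) := rfl

theorem lsDeriv_zero : lsDeriv (0 : LaurentSeries A) = 0 := by
  ext k; simp [lsDeriv_coeff]

theorem lsDeriv_add (f g : LaurentSeries A) : lsDeriv (f + g) = lsDeriv f + lsDeriv g := by
  ext k; simp [lsDeriv_coeff, smul_add]

theorem lsDeriv_one : lsDeriv (1 : LaurentSeries A) = 0 := by
  ext k
  rw [lsDeriv_coeff]
  rcases eq_or_ne (k + 1) 0 with h | h
  · rw [h, zero_smul]; rfl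
  · rw [HahnSeries.coeff_one, if_neg h, smul_zero]; rfl

theorem lsDeriv_smul [Algebra ℂ A] (c : ℂ) (f : LaurentSeries A) :
    lsDeriv (c • f) = c • lsDeriv f := by
  ext k
  rw [lsDeriv_coeff, HahnSeries.coeff_smul, HahnSeries.coeff_smul, lsDeriv_coeff, smul_comm]

/-- `lsDeriv` as an additive monoid homomorphism. -/
noncomputable def lsDerivHom : LaurentSeries A →+ LaurentSeries A :=
  ⟨⟨lsDeriv, lsDeriv_zero⟩, lsDeriv_add⟩

theorem lsDerivHom_apply (f : LaurentSeries A) : lsDerivHom f = lsDeriv f := rfl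

theorem mul_coeff_sum' (f g : LaurentSeries A) (a : ℤ) (F : Finset ℤ)
    (hF : ∀ i : ℤ, f.coeff i ≠ 0 → g.coeff (a - i) ≠ 0 → i ∈ F) :
    (f * g).coeff a = ∑ i ∈ F, f.coeff i * g.coeff (a - i) := by
  rw [HahnSeries.coeff_mul]
  refine Finset.sum_bij_ne_zero (fun ij _ _ => ij.1) ?_ ?_ ?_ ?_
  · rintro ⟨i, j⟩ h1 h2
    rw [Finset.mem_addAntidiagonal] at h1
    have he : j = a - i := by omega
    refine hF i (fun h0 => h2 ?_) (fun h0 => h2 ?_)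
    · simp [h0]
    · simp [he ▸ h0]
  · rintro ⟨i, j⟩ h1 _ ⟨i', j'⟩ h1' _ h
    rw [Finset.mem_addAntidiagonal] at h1 h1'
    simp only at h
    ext <;> omega
  · intro i hi hne
    refine ⟨(i, a - i), ?_, fun h => hne (by simp [h]), rfl⟩
    rw [Finset.mem_addAntidiagonal]
    refine ⟨fun h => hne ?_, fun h => hne ?_, by ring⟩
    · simp_all
    · simp_all
  · rintro ⟨i, j⟩ h1 _
    rw [Finset.mem_addAntidiagonal] at h1
    have he : j = a - i := by omega
    simp only []
    rw [he]

theorem ls_mul_comm (f g : LaurentSeries A)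
    (h : ∀ i j : ℤ, Commute (f.coeff i) (g.coeff j)) : f * g = g * f := by
  ext a
  classical
  set F : Finset ℤ :=
    ((addAntidiagonal f.isPWO_support g.isPWO_support a).image Prod.fst) ∪
      ((addAntidiagonal g.isPWO_support f.isPWO_support a).image Prod.fst) with hF
  set F' : Finset ℤ := F ∪ F.image (fun i => a - i) with hF'
  have hclosed : ∀ i ∈ F', a - i ∈ F' := by
    intro i hi
    rw [hF', Finset.mem_union] at hi ⊢
    rcases hi with hi | hi
    · exact Or.inr (Finset.mem_image.mpr ⟨i, hi, rfl⟩)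
    · rcases Finset.mem_image.mp hi with ⟨m, hm, rfl⟩
      exact Or.inl (by simpa using hm)
  have h1 : (f * g).coeff a = ∑ i ∈ F', f.coeff i * g.coeff (a - i) := by
    refine mul_coeff_sum' f g a F' fun i hf hg => ?_
    exact Finset.mem_union_left _ (Finset.mem_union_left _ (Finset.mem_image.mpr
      ⟨(i, a - i), Finset.mem_addAntidiagonal.mpr ⟨hf, hg, by ring⟩, rfl⟩))
  have h2 : (g * f).coeff a = ∑ i ∈ F', g.coeff i * f.coeff (a - i) := by
    refine mul_coeff_sum' g f a F' fun i hg hf => ?_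
    exact Finset.mem_union_left _ (Finset.mem_union_right _ (Finset.mem_image.mpr
      ⟨(i, a - i), Finset.mem_addAntidiagonal.mpr ⟨hg, hf, by ring⟩, rfl⟩))
  rw [h1, h2]
  refine Finset.sum_nbij' (fun i => a - i) (fun i => a - i) (fun i hi => hclosed i hi)
    (fun i hi => hclosed i hi) (fun i _ => by ring) (fun i _ => by ring) ?_
  intro i _
  have : a - (a - i) = i := by ring
  rw [this]
  exact (h i (a - i)).eq

theorem lsDeriv_mul (f g : LaurentSeries A) :
    lsDeriv (f * g) = lsDeriv f * g + f * lsDeriv g := by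
  ext k
  classical
  set F : Finset ℤ :=
    (addAntidiagonal f.isPWO_support g.isPWO_support (k + 1)).image Prod.fst with hF
  have hFmem : ∀ i : ℤ, f.coeff i ≠ 0 → g.coeff (k + 1 - i) ≠ 0 → i ∈ F := by
    intro i hf hg
    exact Finset.mem_image.mpr ⟨(i, k + 1 - i),
      Finset.mem_addAntidiagonal.mpr ⟨hf, hg, by ring⟩, rfl⟩
  have h1 : (f * g).coeff (k + 1) = ∑ i ∈ F, f.coeff i * g.coeff (k + 1 - i) :=
    mul_coeff_sum' f g (k + 1) F (by intro i hf hg; exact hFmem i hf (by convert hg using 2))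
  have h2 : (lsDeriv f * g).coeff k = ∑ i ∈ F, (i • f.coeff i) * g.coeff (k + 1 - i) := by
    rw [mul_coeff_sum' (lsDeriv f) g k (F.image (fun i => i - 1)) ?_]
    · rw [Finset.sum_image (by intro x _ y _ h; simp only at h; omega)]
      refine Finset.sum_congr rfl fun i _ => ?_
      rw [lsDeriv_coeff]
      have e1 : i - 1 + 1 = i := by ring
      have e2 : k - (i - 1) = k + 1 - i := by ring
      rw [e1, e2]
    · intro i hdf hg
      have hf : f.coeff (i + 1) ≠ 0 := fun h => hdf (by rw [lsDeriv_coeff, h, smul_zero])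
      have hg' : g.coeff (k + 1 - (i + 1)) ≠ 0 := by
        have : k + 1 - (i + 1) = k - i := by ring
        rw [this]; exact hg
      exact Finset.mem_image.mpr ⟨i + 1, hFmem _ hf hg', by ring⟩
  have h3 : (f * lsDeriv g).coeff k
      = ∑ i ∈ F, f.coeff i * ((k + 1 - i) • g.coeff (k + 1 - i)) := by
    rw [mul_coeff_sum' f (lsDeriv g) k F ?_]
    · refine Finset.sum_congr rfl fun i _ => ?_
      rw [lsDeriv_coeff]
      have e : k - i + 1 = k + 1 - i := by ring
      rw [e]
    · intro i hf hdg
      have hg : g.coeff (k - i + 1) ≠ 0 := fun h => hdg (by rw [lsDeriv_coeff, h, smul_zero])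
      refine hFmem i hf ?_
      have : k + 1 - i = k - i + 1 := by ring
      rw [this]; exact hg
  rw [HahnSeries.coeff_add, h2, h3, lsDeriv_coeff, h1, Finset.smul_sum, ← Finset.sum_add_distrib]
  refine Finset.sum_congr rfl fun i _ => ?_
  rw [smul_mul_assoc, mul_smul_comm, ← add_smul]
  congr 1
  ring

theorem ls_mul_smul [Algebra ℂ A] (c : ℂ) (a b : LaurentSeries A) :
    a * (c • b) = c • (a * b) := by
  classical
  ext k
  set F : Finset ℤ := (addAntidiagonal a.isPWO_support b.isPWO_support k).image Prod.fst with hF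
  have hmem : ∀ i : ℤ, a.coeff i ≠ 0 → b.coeff (k - i) ≠ 0 → i ∈ F := fun i ha hb =>
    Finset.mem_image.mpr ⟨(i, k - i), Finset.mem_addAntidiagonal.mpr ⟨ha, hb, by ring⟩, rfl⟩
  rw [HahnSeries.coeff_smul, mul_coeff_sum' a (c • b) k F ?_, mul_coeff_sum' a b k F hmem,
    Finset.smul_sum]
  · exact Finset.sum_congr rfl fun i _ => by rw [HahnSeries.coeff_smul, mul_smul_comm]
  · intro i ha hb
    exact hmem i ha fun h => hb (by rw [HahnSeries.coeff_smul, h, smul_zero])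

theorem ls_power_rule (D : A → A) (hD1 : D 1 = 0)
    (hDmul : ∀ f g : A, D (f * g) = D f * g + f * D g)
    (U : Aˣ) (hc : ∀ n : ℤ, Commute (D ↑U) ↑(U ^ n)) :
    ∀ n : ℤ, D ↑(U ^ n) = n • (↑(U ^ (n - 1)) * D ↑U) := by
  have hcu : D ↑U * ↑U = ↑U * D ↑U := by
    have := hc 1; rw [zpow_one] at this; exact this.eq
  have hcinv : D ↑U * ↑U⁻¹ = ↑U⁻¹ * D ↑U := by
    have := hc (-1); rw [zpow_neg_one] at this; exact this.eq
  have hsucc : ∀ n : ℤ, D ↑(U ^ n) = n • (↑(U ^ (n - 1)) * D ↑U) →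
      D ↑(U ^ (n + 1)) = (n + 1) • (↑(U ^ (n + 1 - 1)) * D ↑U) := by
    intro n ih
    have e1 : n + 1 - 1 = n := by ring
    have e2 : (↑(U ^ (n - 1)) : A) * ↑U = ↑(U ^ n) := by
      rw [← Units.val_mul, ← zpow_add_one, sub_add_cancel]
    have hstep : (↑(U ^ (n + 1)) : A) = ↑(U ^ n) * ↑U := by
      rw [zpow_add_one, Units.val_mul]
    rw [hstep, hDmul, ih, e1, smul_mul_assoc, mul_assoc, hcu, ← mul_assoc, e2,
      add_smul, one_smul]
  have hpred : ∀ n : ℤ, D ↑(U ^ n) = n • (↑(U ^ (n - 1)) * D ↑U) →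
      D ↑(U ^ (n - 1)) = (n - 1) • (↑(U ^ (n - 1 - 1)) * D ↑U) := by
    intro n ih
    have hsplit : (↑(U ^ n) : A) = ↑(U ^ (n - 1)) * ↑U := by
      rw [← Units.val_mul, ← zpow_add_one, sub_add_cancel]
    have h1 : D ↑(U ^ (n - 1)) * ↑U + ↑(U ^ (n - 1)) * D ↑U
        = n • (↑(U ^ (n - 1)) * D ↑U) := by
      rw [← hDmul, ← hsplit, ih]
    have h2 : D ↑(U ^ (n - 1)) * ↑U = (n - 1) • (↑(U ^ (n - 1)) * D ↑U) := by
      rw [sub_smul, one_smul, ← h1]; abel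
    have h3 : D ↑(U ^ (n - 1)) = D ↑(U ^ (n - 1)) * ↑U * ↑U⁻¹ := by
      rw [mul_assoc, Units.mul_inv, mul_one]
    rw [h3, h2, smul_mul_assoc, mul_assoc, hcinv, ← mul_assoc, ← Units.val_mul,
      ← zpow_sub_one]
  intro n
  induction n using Int.induction_on with
  | zero => simp [hD1]
  | succ i ih => exact_mod_cast hsucc i (by exact_mod_cast ih)
  | pred i ih => exact_mod_cast hpred (-i) (by exact_mod_cast ih)

end Aux

/-- Let `M` be a ℂ-vector space, `q ∈ ℂ[s,s⁻¹]`, and `D` the derivation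
`u ↦ q·(du/ds)` of `ℂ[s,s⁻¹]`.  If `S(x) ∈ (End_ℂ M)((x))` is invertible, has pairwise
commuting coefficients, and satisfies `dS/dx = q(S)`, then there is a unique ℂ-algebra
homomorphism `Y : ℂ[s,s⁻¹] → (End_ℂ M)((x))` with `Y s = S`; it is given by
`Y u = u(S)` and satisfies `Y (D u) = d/dx (Y u)` for all `u`. -/
theorem stmt_2 (M : Type*) [AddCommGroup M] [Module ℂ M] (q : LaurentPolynomial ℂ)
    (S : LaurentSeries (Module.End ℂ M)) (hU : IsUnit S)
    (hcomm : ∀ i j : ℤ, Commute (S.coeff i) (S.coeff j))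
    (hode : lsDeriv S = evalLP q hU.unit) :
    (∃! Y : LaurentPolynomial ℂ →ₐ[ℂ] LaurentSeries (Module.End ℂ M),
        Y (LaurentPolynomial.T 1) = S) ∧
    (∀ Y : LaurentPolynomial ℂ →ₐ[ℂ] LaurentSeries (Module.End ℂ M),
      Y (LaurentPolynomial.T 1) = S →
        (∀ u : LaurentPolynomial ℂ, Y u = evalLP u hU.unit) ∧
        (∀ u : LaurentPolynomial ℂ, Y (q * lpDeriv u) = lsDeriv (Y u))) := by
  classical
  -- any algebra hom sending T 1 to S sends T n to (hU.unit)^n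
  have hTn : ∀ Y : LaurentPolynomial ℂ →ₐ[ℂ] LaurentSeries (Module.End ℂ M),
      Y (LaurentPolynomial.T 1) = S →
      ∀ n : ℤ, Y (LaurentPolynomial.T n) = ↑(hU.unit ^ n) := by
    intro Y hY n
    have h := MonoidHom.ext_mint
      (f := (Y : LaurentPolynomial ℂ →* _).comp (AddMonoidAlgebra.of ℂ ℤ))
      (g := (Units.coeHom _).comp (zpowersHom _ hU.unit)) ?_
    · have := DFunLike.congr_fun h (Multiplicative.ofAdd n)
      simpa [zpowersHom_apply] using this
    · simpa [zpowersHom_apply] using hY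
  -- any such hom agrees with evalLP
  have heval : ∀ Y : LaurentPolynomial ℂ →ₐ[ℂ] LaurentSeries (Module.End ℂ M),
      Y (LaurentPolynomial.T 1) = S →
      ∀ u : LaurentPolynomial ℂ, Y u = evalLP u hU.unit := by
    intro Y hY u
    conv_lhs => rw [← AddMonoidAlgebra.sum_coeff_single u]
    rw [map_finsuppSum]
    refine Finsupp.sum_congr fun n hn => ?_
    have hs : (AddMonoidAlgebra.single n (u.coeff n) : LaurentPolynomial ℂ) = (u.coeff n) • LaurentPolynomial.T n := by
      rw [LaurentPolynomial.T, AddMonoidAlgebra.smul_single', mul_one]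
    rw [hs, map_smul, hTn Y hY]
  -- existence
  let φ : Multiplicative ℤ →* LaurentSeries (Module.End ℂ M) :=
    (Units.coeHom _).comp (zpowersHom _ hU.unit)
  let Y₀ : LaurentPolynomial ℂ →ₐ[ℂ] LaurentSeries (Module.End ℂ M) :=
    AddMonoidAlgebra.lift ℂ _ ℤ φ
  have hY₀ : Y₀ (LaurentPolynomial.T 1) = S := by
    show AddMonoidAlgebra.lift ℂ _ ℤ φ (AddMonoidAlgebra.single (1 : ℤ) (1 : ℂ)) = S
    rw [AddMonoidAlgebra.lift_single]
    simp [φ, zpowersHom_apply]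
  -- commutation of lsDeriv S with the powers of hU.unit
  have hc0 : lsDeriv S * S = S * lsDeriv S := by
    refine ls_mul_comm _ _ fun i j => ?_
    have hco : (lsDeriv S).coeff i = (i + 1) • S.coeff (i + 1) := rfl
    rw [Commute, SemiconjBy, hco, smul_mul_assoc, (hcomm (i + 1) j).eq, mul_smul_comm]
  have hC : ∀ n : ℤ, Commute (lsDeriv S) ↑(hU.unit ^ n) := by
    have hc1 : Commute (lsDeriv S) (↑hU.unit : LaurentSeries (Module.End ℂ M)) := by
      rw [Commute, SemiconjBy, IsUnit.unit_spec]
      exact hc0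
    exact fun n => hc1.units_zpow_right n
  -- power rule for lsDeriv at hU.unit
  have key : ∀ n : ℤ, lsDeriv ↑(hU.unit ^ n)
      = n • ((↑(hU.unit ^ (n - 1)) : LaurentSeries (Module.End ℂ M)) * lsDeriv S) := by
    have := ls_power_rule lsDeriv lsDeriv_one lsDeriv_mul hU.unit
      (fun n => by rw [IsUnit.unit_spec]; exact hC n)
    intro n
    have h := this n
    rwa [IsUnit.unit_spec] at h
  refine ⟨⟨Y₀, hY₀, fun Y' hY' => ?_⟩, fun Y hT1 => ⟨heval Y hT1, fun u => ?_⟩⟩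
  · exact AlgHom.ext fun u => (heval Y' hY' u).trans (heval Y₀ hY₀ u).symm
  · -- the derivation property
    rw [map_mul]
    have hq : Y q = lsDeriv S := by rw [heval Y hT1 q, ← hode]
    have hYd : Y (lpDeriv u)
        = Finsupp.sum u.coeff fun n c =>
            ((n : ℂ) * c) • (↑(hU.unit ^ (n - 1)) : LaurentSeries (Module.End ℂ M)) := by
      rw [lpDeriv, map_finsuppSum]
      refine Finsupp.sum_congr fun n hn => ?_
      rw [map_smul, hTn Y hT1]
    have hRHS : lsDeriv (Y u)
        = Finsupp.sum u.coeff fun n c =>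
            ((n : ℂ) * c) • ((↑(hU.unit ^ (n - 1)) : LaurentSeries (Module.End ℂ M))
              * lsDeriv S) := by
      rw [heval Y hT1 u, evalLP, ← lsDerivHom_apply, map_finsuppSum]
      refine Finsupp.sum_congr fun n hn => ?_
      rw [lsDerivHom_apply, lsDeriv_smul, key n, ← Int.cast_smul_eq_zsmul ℂ, smul_smul,
        mul_comm]
    rw [hq, hYd, hRHS, Finsupp.mul_sum]
    refine Finsupp.sum_congr fun n hn => ?_
    rw [ls_mul_smul]
    congr 1
    exact (hC (n - 1)).eq
end

section
/- Let n ≥ 1, let p ∈ ℂ[s] be a nonzero polynomial and N_q ∈ ℕ such that p and s^{N_q} are coprime (i.e. N_q = 0 or p(0) ≠ 0). Let S ∈ Mₙ(ℂ)((x)) be invertible in Mₙ(ℂ)((x)), with pairwise commuting coefficients, satisfying S^{N_q}·(dS/dx) = p(S). Assume there exists f ∈ ℂ((x)) of order 0 (i.e. f has nonzero constant coefficient and no negative-degree terms) such that every coefficient of S − f·1ₙ is a nilpotent matrix. Then both S and S⁻¹ lie in Mₙ(ℂ)[[x]] (they have no negative-degree coefficients); consequently u(S) ∈ Mₙ(ℂ)[[x]]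 for every Laurent polynomial u ∈ ℂ[s,s⁻¹]. -/
open Polynomial

attribute [instance 2000] HahnSeries.instAlgebra

namespace Stmt3Aux

variable {R : Type*}

/-- Taking the `k`-th coefficient, as an additive monoid hom. -/
def coeffHom [Ring R] (k : ℤ) : LaurentSeries R →+ R where
  toFun X := X.coeff k
  map_zero' := rfl
  map_add' _ _ := HahnSeries.coeff_add

@[simp] lemma coeffHom_apply [Ring R] (k : ℤ) (X : LaurentSeries R) :
    coeffHom k X = X.coeff k := rfl

lemma nsmul_coeff [Ring R] (n : ℕ) (X : LaurentSeries R) (k : ℤ) :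
    ((n : LaurentSeries R) * X).coeff k = n • X.coeff k := by
  rw [← nsmul_eq_mul]
  exact map_nsmul (coeffHom k) n X

@[simp] lemma lsDeriv_coeff [Ring R] (X : LaurentSeries R) (k : ℤ) :
    (lsDeriv X).coeff k = (k + 1) • X.coeff (k + 1) := rfl

lemma lsDeriv_add [Ring R] (X Y : LaurentSeries R) :
    lsDeriv (X + Y) = lsDeriv X + lsDeriv Y := by
  ext k
  simp [HahnSeries.coeff_add, smul_add]

lemma nn_lsDeriv [Ring R] {X : LaurentSeries R} (h : ∀ k < (0:ℤ), X.coeff k = 0) :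
    ∀ k < (0:ℤ), (lsDeriv X).coeff k = 0 := by
  intro k hk
  rw [lsDeriv_coeff]
  rcases eq_or_lt_of_le (by omega : k + 1 ≤ 0) with h1 | h1
  · rw [h1, zero_smul]
  · rw [h (k+1) h1, smul_zero]

/-- Coefficient of a product where the left factor has no negative coefficients and the
right factor is supported in degrees `≥ m`. -/
lemma mul_coeff_nn [Ring R] {X Y : LaurentSeries R} (hX : ∀ k < (0:ℤ), X.coeff k = 0)
    {m : ℤ} (hY : ∀ j < m, Y.coeff j = 0) :
    (X * Y).coeff m = X.coeff 0 * Y.coeff m := by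
  classical
  rw [HahnSeries.coeff_mul]
  refine Finset.sum_eq_single ((0:ℤ), m) ?_ ?_
  · intro ij hij hne
    rw [Finset.mem_addAntidiagonal] at hij
    obtain ⟨h1, h2, h3⟩ := hij
    rcases lt_or_ge ij.1 0 with h | h
    · exact absurd (hX _ h) ((X.mem_support ij.1).mp h1)
    rcases lt_or_ge ij.2 m with h' | h'
    · exact absurd (hY _ h') ((Y.mem_support ij.2).mp h2)
    · exact absurd (Prod.ext (by omega) (by omega)) hne
  · intro h
    by_cases h0 : X.coeff 0 = 0
    · rw [h0, zero_mul]
    by_cases hm : Y.coeff m = 0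
    · rw [hm, mul_zero]
    exact absurd (Finset.mem_addAntidiagonal.mpr
      ⟨(X.mem_support 0).mpr h0, (Y.mem_support m).mpr hm, zero_add m⟩) h

/-- Mod an ideal version of `mul_coeff_nn`. -/
lemma mul_coeff_mem [CommRing R] (P : Ideal R) {X Y : LaurentSeries R}
    (hX : ∀ k < (0:ℤ), X.coeff k = 0) {m : ℤ} (hY : ∀ j < m, Y.coeff j ∈ P) :
    (X * Y).coeff m - X.coeff 0 * Y.coeff m ∈ P := by
  classical
  rw [HahnSeries.coeff_mul]
  have hterm : ∀ ij : ℤ × ℤ,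
      ij ∈ Finset.antidiagonal X.isPWO_support Y.isPWO_support m →
      ij ≠ (0, m) → X.coeff ij.1 * Y.coeff ij.2 ∈ P := by
    intro ij hij hne
    rw [Finset.mem_addAntidiagonal] at hij
    obtain ⟨h1, h2, h3⟩ := hij
    rcases lt_or_ge ij.1 0 with h | h
    · rw [hX _ h, zero_mul]; exact P.zero_mem
    rcases lt_or_ge ij.2 m with h' | h'
    · exact Ideal.mul_mem_left _ _ (hY _ h')
    · exact absurd (Prod.ext (by omega) (by omega)) hne
  by_cases hmem : ((0:ℤ), m) ∈ Finset.antidiagonal X.isPWO_support Y.isPWO_support m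
  · rw [← Finset.add_sum_erase _ _ hmem]
    have hre : X.coeff ((0:ℤ), m).1 * Y.coeff ((0:ℤ), m).2 = X.coeff 0 * Y.coeff m := rfl
    rw [hre, add_sub_cancel_left]
    exact Ideal.sum_mem _ fun ij hij =>
      hterm ij (Finset.mem_of_mem_erase hij) (Finset.ne_of_mem_erase hij)
  · have h0 : X.coeff 0 * Y.coeff m = 0 := by
      by_cases h0 : X.coeff 0 = 0
      · rw [h0, zero_mul]
      by_cases hm' : Y.coeff m = 0
      · rw [hm', mul_zero]
      exact absurd (Finset.mem_addAntidiagonal.mpr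
        ⟨(X.mem_support 0).mpr h0, (Y.mem_support m).mpr hm', zero_add m⟩) hmem
    rw [h0, sub_zero]
    exact Ideal.sum_mem _ fun ij hij => hterm ij hij (fun h => hmem (h ▸ hij))

/-- The subalgebra of Laurent series with no negative coefficients. -/
def nnSub (R : Type*) [Ring R] [Algebra ℂ R] : Subalgebra ℂ (LaurentSeries R) where
  carrier := {X | ∀ k < (0:ℤ), X.coeff k = 0}
  add_mem' := by
    intro X Y hx hy k hk
    rw [HahnSeries.coeff_add, hx k hk, hy k hk, add_zero]
  mul_mem' := by
    intro X Y hx hy k hk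
    rw [HahnSeries.coeff_mul]
    refine Finset.sum_eq_zero fun ij hij => ?_
    rw [Finset.mem_addAntidiagonal] at hij
    obtain ⟨h1, h2, h3⟩ := hij
    rcases lt_or_ge ij.1 0 with h | h
    · rw [hx _ h, zero_mul]
    · rw [hy _ (by omega), mul_zero]
  algebraMap_mem' := by
    intro c k hk
    rw [HahnSeries.algebraMap_apply, HahnSeries.C_apply, HahnSeries.coeff_single_of_ne hk.ne]

lemma nn_coeff {R : Type*} [Ring R] [Algebra ℂ R] {X : LaurentSeries R}
    (h : X ∈ nnSub R) : ∀ k < (0:ℤ), X.coeff k = 0 := h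

lemma nn_mem {R : Type*} [Ring R] [Algebra ℂ R] {X : LaurentSeries R}
    (h : ∀ k < (0:ℤ), X.coeff k = 0) : X ∈ nnSub R := h

lemma nn_aeval {R : Type*} [CommRing R] [Algebra ℂ R] {X : LaurentSeries R}
    (h : X ∈ nnSub R) (q : ℂ[X]) : aeval X q ∈ nnSub R := by
  have h1 : aeval X q ∈ Algebra.adjoin ℂ {X} := by
    rw [Algebra.adjoin_singleton_eq_range_aeval]
    exact ⟨q, rfl⟩
  exact Algebra.adjoin_le (Set.singleton_subset_iff.mpr h) h1

/-- All coefficients in an ideal. -/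
def CP [CommRing R] (P : Ideal R) (X : LaurentSeries R) : Prop := ∀ k, X.coeff k ∈ P

lemma CP.zero [CommRing R] (P : Ideal R) : CP P (0 : LaurentSeries R) :=
  fun _ => by rw [HahnSeries.coeff_zero]; exact P.zero_mem

lemma CP.add [CommRing R] {P : Ideal R} {X Y : LaurentSeries R} (hX : CP P X) (hY : CP P Y) :
    CP P (X + Y) := fun k => by
  rw [HahnSeries.coeff_add]; exact P.add_mem (hX k) (hY k)

lemma CP.mul_left [CommRing R] {P : Ideal R} {Y : LaurentSeries R} (X : LaurentSeries R)
    (hY : CP P Y) : CP P (X * Y) := fun k => by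
  rw [HahnSeries.coeff_mul]
  exact Ideal.sum_mem _ fun ij _ => Ideal.mul_mem_left _ _ (hY _)

lemma CP.mul_right [CommRing R] {P : Ideal R} {X : LaurentSeries R} (hX : CP P X)
    (Y : LaurentSeries R) : CP P (X * Y) := fun k => by
  rw [HahnSeries.coeff_mul]
  exact Ideal.sum_mem _ fun ij _ => Ideal.mul_mem_right _ _ (hX _)

lemma pow_expand [CommRing R] (P : Ideal R) {G E : LaurentSeries R} (hEE : CP P (E * E)) :
    ∀ q : ℕ, ∃ D, CP P D ∧
      (G + E) ^ q = G ^ q + (q : LaurentSeries R) * (G ^ (q - 1) * E) + D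
  | 0 => ⟨0, CP.zero P, by simp⟩
  | 1 => ⟨0, CP.zero P, by simp⟩
  | (r + 2) => by
    obtain ⟨D, hD, hq⟩ := pow_expand P hEE (r + 1)
    refine ⟨D * (G + E) + ((r+1 : ℕ) : LaurentSeries R) * (G ^ r * (E * E)),
      CP.add (hD.mul_right _) (CP.mul_left _ (CP.mul_left _ hEE)), ?_⟩
    have h : (r + 2) = (r + 1) + 1 := rfl
    rw [h, pow_succ, hq]
    simp only [Nat.add_sub_cancel]
    push_cast
    ring

lemma aeval_expand [CommRing R] [Algebra ℂ R] (P : Ideal R) {G E : LaurentSeries R}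
    (hEE : CP P (E * E)) (p : ℂ[X]) :
    ∃ D, CP P D ∧
      aeval (G + E) p = aeval G p + aeval G (derivative p) * E + D := by
  induction p using Polynomial.induction_on' with
  | add p q hp hq =>
    obtain ⟨D1, hD1, h1⟩ := hp
    obtain ⟨D2, hD2, h2⟩ := hq
    refine ⟨D1 + D2, hD1.add hD2, ?_⟩
    simp only [map_add, derivative_add, h1, h2]
    ring
  | monomial q a =>
    obtain ⟨D, hD, hq⟩ := pow_expand P hEE q
    refine ⟨algebraMap ℂ _ a * D, CP.mul_left _ hD, ?_⟩
    rw [derivative_monomial, aeval_monomial, aeval_monomial, aeval_monomial, hq, map_mul,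
      map_natCast (algebraMap ℂ (LaurentSeries R))]
    ring

/-- The key lemma: modulo `P`, the negative part `E` of a solution of the ODE vanishes. -/
lemma key {A : Type*} [CommRing A] [Algebra ℂ A] (p : ℂ[X]) (Nq : ℕ)
    (G E : LaurentSeries A) (f0 : ℂ) (hf0 : f0 ≠ 0)
    (hG : ∀ k < (0:ℤ), G.coeff k = 0)
    (L P : Ideal A)
    (hG0 : G.coeff 0 - algebraMap ℂ A f0 ∈ L)
    (hE0 : ∀ k : ℤ, 0 ≤ k → E.coeff k = 0)
    (hEL : ∀ (k : ℤ), ∀ b ∈ L, E.coeff k * b ∈ P)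
    (hEE : ∀ k l : ℤ, E.coeff k * E.coeff l ∈ P)
    (hode : (G + E) ^ Nq * lsDeriv (G + E) = aeval (G + E) p) :
    ∀ j : ℤ, E.coeff j ∈ P := by
  by_contra hcon
  push_neg at hcon
  have hne : {j : ℤ | E.coeff j ∉ P}.Nonempty := hcon
  have hsub : {j : ℤ | E.coeff j ∉ P} ⊆ E.support := fun j hj =>
    (E.mem_support j).mpr (fun h0 => hj (by rw [h0]; exact P.zero_mem))
  have hwf : {j : ℤ | E.coeff j ∉ P}.IsWF := E.isPWO_support.isWF.mono hsub
  set m := hwf.min hne with hmdef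
  have hmBad : E.coeff m ∉ P := hwf.min_mem hne
  have hmneg : m < 0 := by
    by_contra h
    exact hmBad (by rw [hE0 m (le_of_not_gt h)]; exact P.zero_mem)
  have hbelow : ∀ j < m, E.coeff j ∈ P := by
    intro j hj
    by_contra h
    exact hwf.not_lt_min hne h hj
  have hEEcp : CP P (E * E) := fun k => by
    rw [HahnSeries.coeff_mul]
    exact Ideal.sum_mem _ fun ij _ => hEE _ _
  have hEE'cp : CP P (E * lsDeriv E) := fun k => by
    rw [HahnSeries.coeff_mul]
    refine Ideal.sum_mem _ fun ij _ => ?_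
    rw [lsDeriv_coeff, mul_smul_comm]
    exact zsmul_mem (hEE _ _) _
  obtain ⟨D1, hD1, h1⟩ := pow_expand P hEEcp Nq
  obtain ⟨D2, hD2, h2⟩ := aeval_expand P hEEcp p
  have hGnn : G ∈ nnSub A := nn_mem hG
  have hGq : ∀ q : ℕ, ∀ k < (0:ℤ), (G ^ q).coeff k = 0 :=
    fun q => nn_coeff (pow_mem hGnn q)
  have hG' := nn_lsDeriv hG
  -- a reusable step: coefficients of `X * E` at indices `≤ m - 1` lie in `P`,
  -- whenever `X` has no negative coefficients
  have hXE : ∀ (X : LaurentSeries A), X ∈ nnSub A → ∀ k ≤ m - 1, (X * E).coeff k ∈ P := by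
    intro X hX k hk
    have hd := mul_coeff_mem P (nn_coeff hX) (m := k) (fun j hj => hbelow j (by omega))
    have hm1 : X.coeff 0 * E.coeff k ∈ P :=
      Ideal.mul_mem_left _ _ (hbelow _ (by omega))
    have := P.add_mem hd hm1
    simpa using this
  -- the main coefficient membership
  have hmain : ((G ^ Nq) * lsDeriv E).coeff (m - 1) ∈ P := by
    have heq : (G ^ Nq) * lsDeriv E =
        aeval G p + aeval G (derivative p) * E + D2
        - G ^ Nq * lsDeriv G
        - (Nq : LaurentSeries A) * ((G ^ (Nq - 1) * lsDeriv G) * E)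
        - (Nq : LaurentSeries A) * (G ^ (Nq - 1) * (E * lsDeriv E))
        - D1 * lsDeriv G - D1 * lsDeriv E := by
      have h := hode
      rw [h1, h2, lsDeriv_add] at h
      linear_combination h
    rw [heq]
    simp only [HahnSeries.coeff_sub, HahnSeries.coeff_add]
    have hA1 : (aeval G p).coeff (m - 1) = 0 :=
      nn_coeff (nn_aeval hGnn p) _ (by omega)
    have hA2 : ((aeval G (derivative p)) * E).coeff (m - 1) ∈ P :=
      hXE _ (nn_aeval hGnn (derivative p)) _ le_rfl
    have hA4 : (G ^ Nq * lsDeriv G).coeff (m - 1) = 0 :=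
      nn_coeff (mul_mem (pow_mem hGnn Nq) (nn_mem hG')) _ (by omega)
    have hA5 : ((Nq : LaurentSeries A) * ((G ^ (Nq - 1) * lsDeriv G) * E)).coeff (m - 1) ∈ P := by
      rw [nsmul_coeff]
      exact nsmul_mem (hXE _ (mul_mem (pow_mem hGnn (Nq - 1)) (nn_mem hG')) _ le_rfl) _
    have hA6 : ((Nq : LaurentSeries A) * (G ^ (Nq - 1) * (E * lsDeriv E))).coeff (m - 1) ∈ P := by
      rw [nsmul_coeff]
      exact nsmul_mem (CP.mul_left _ hEE'cp (m - 1)) _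
    have hA7 : (D1 * lsDeriv G).coeff (m - 1) ∈ P := hD1.mul_right _ _
    have hA8 : (D1 * lsDeriv E).coeff (m - 1) ∈ P := hD1.mul_right _ _
    rw [hA1, hA4]
    refine Ideal.sub_mem _ (Ideal.sub_mem _ (Ideal.sub_mem _ (Ideal.sub_mem _
      (Ideal.sub_mem _ (Ideal.add_mem _ (Ideal.add_mem _ P.zero_mem hA2) (hD2 _))
        P.zero_mem) hA5) hA6) hA7) hA8
  -- isolate the leading term
  have hc1 : ((G ^ Nq) * lsDeriv E).coeff (m - 1)
      - (G ^ Nq).coeff 0 * (lsDeriv E).coeff (m - 1) ∈ P :=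
    mul_coeff_mem P (hGq Nq) (m := m - 1) (fun j hj => by
      rw [lsDeriv_coeff]
      exact zsmul_mem (hbelow _ (by omega)) _)
  have hdm : (lsDeriv E).coeff (m - 1) = m • E.coeff m := by
    rw [lsDeriv_coeff, sub_add_cancel]
  have hkey : (G.coeff 0) ^ Nq * (m • E.coeff m) ∈ P := by
    have h' := P.sub_mem hmain hc1
    have hg0 : ∀ q : ℕ, (G ^ q).coeff 0 = (G.coeff 0) ^ q := by
      intro q
      induction q with
      | zero => simp
      | succ q ih =>
        rw [pow_succ, mul_coeff_nn (hGq q) (fun j hj => hG j hj), ih, pow_succ]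
    rw [sub_sub_cancel, hdm, hg0] at h'
    exact h'
  -- replace the base by the scalar f0
  have hLpow : (G.coeff 0) ^ Nq - (algebraMap ℂ A f0) ^ Nq ∈ L := by
    have h1 : Ideal.Quotient.mk L (G.coeff 0) = Ideal.Quotient.mk L (algebraMap ℂ A f0) :=
      Ideal.Quotient.eq.mpr hG0
    refine Ideal.Quotient.eq.mp ?_
    rw [map_pow, map_pow, h1]
  have hsc : (algebraMap ℂ A f0) ^ Nq * (m • E.coeff m) ∈ P := by
    have hX : (m • E.coeff m) * ((G.coeff 0) ^ Nq - (algebraMap ℂ A f0) ^ Nq) ∈ P := by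
      rw [smul_mul_assoc]
      exact zsmul_mem (hEL m _ hLpow) m
    have h3 : (algebraMap ℂ A f0) ^ Nq * (m • E.coeff m)
        = (G.coeff 0) ^ Nq * (m • E.coeff m)
          - (m • E.coeff m) * ((G.coeff 0) ^ Nq - (algebraMap ℂ A f0) ^ Nq) := by
      ring
    rw [h3]
    exact P.sub_mem hkey hX
  -- conclude `E.coeff m ∈ P`, contradiction
  have hfin : E.coeff m ∈ P := by
    have h4 : ((f0 ^ Nq * (m : ℂ))) • E.coeff m ∈ P := by
      have : (algebraMap ℂ A f0) ^ Nq * (m • E.coeff m)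
          = ((f0 ^ Nq * (m : ℂ))) • E.coeff m := by
        rw [← map_pow, ← Int.cast_smul_eq_zsmul ℂ m (E.coeff m), Algebra.smul_def,
          Algebra.smul_def, map_mul, mul_assoc]
      rw [this] at hsc
      exact hsc
    have hne0 : f0 ^ Nq * (m : ℂ) ≠ 0 :=
      mul_ne_zero (pow_ne_zero _ hf0) (Int.cast_ne_zero.mpr (by omega))
    have h6 : E.coeff m = (f0 ^ Nq * (m : ℂ))⁻¹ • ((f0 ^ Nq * (m : ℂ)) • E.coeff m) := by
      rw [smul_smul, inv_mul_cancel₀ hne0, one_smul]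
    rw [h6, Algebra.smul_def]
    exact Ideal.mul_mem_left _ _ h4
  exact hmBad hfin

section Map

variable {A B : Type*}

/-- The coefficientwise map of Laurent series induced by a ring hom, as a ring hom. -/
def mapRH [Ring A] [Ring B] (φ : A →+* B) : LaurentSeries A →+* LaurentSeries B where
  toFun X := X.map φ.toNonUnitalRingHom
  map_zero' := by
    ext k
    simp
  map_add' X Y := by
    ext k
    simp [HahnSeries.coeff_add]
  map_one' := by
    ext k
    simp only [HahnSeries.map_coeff, HahnSeries.coeff_one]
    split
    · exact map_one φ
    · exact map_zero φ
  map_mul' X Y := HahnSeries.map_mul φ.toNonUnitalRingHom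

@[simp] lemma mapRH_coeff [Ring A] [Ring B] (φ : A →+* B) (X : LaurentSeries A) (k : ℤ) :
    (mapRH φ X).coeff k = φ (X.coeff k) := rfl

lemma mapRH_lsDeriv [Ring A] [Ring B] (φ : A →+* B) (X : LaurentSeries A) :
    mapRH φ (lsDeriv X) = lsDeriv (mapRH φ X) := by
  ext k
  simp only [mapRH_coeff, lsDeriv_coeff]
  rw [map_zsmul]

lemma mapRH_injective [Ring A] [Ring B] (φ : A →+* B) (h : Function.Injective φ) :
    Function.Injective (mapRH φ) := by
  intro X Y hXY
  ext k
  exact h (congrArg (fun Z : LaurentSeries B => Z.coeff k) hXY)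

lemma mapRH_algebraMap [Ring A] [Ring B] [Algebra ℂ A] [Algebra ℂ B] (ψ : A →ₐ[ℂ] B) (c : ℂ) :
    mapRH ψ.toRingHom (algebraMap ℂ (LaurentSeries A) c) = algebraMap ℂ (LaurentSeries B) c := by
  ext k
  simp only [mapRH_coeff, HahnSeries.algebraMap_apply, HahnSeries.C_apply,
    HahnSeries.coeff_single]
  split
  · exact ψ.commutes c
  · exact map_zero _

lemma mapRH_aeval [Ring A] [Ring B] [Algebra ℂ A] [Algebra ℂ B]
    (ψ : A →ₐ[ℂ] B) (Z : LaurentSeries A) (p : ℂ[X]) :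
    mapRH ψ.toRingHom (aeval Z p) = aeval (mapRH ψ.toRingHom Z) p := by
  rw [Polynomial.aeval_def, Polynomial.aeval_def, Polynomial.hom_eval₂]
  rw [show (mapRH ψ.toRingHom).comp (algebraMap ℂ (LaurentSeries A))
      = algebraMap ℂ (LaurentSeries B) from RingHom.ext fun c => mapRH_algebraMap ψ c]

end Map


section CAlg

variable {M : Type*} [Ring M] [Algebra ℂ M]

/-- The commutative algebra generated by a set of pairwise commuting elements,
as a type synonym carrying a `CommRing` instance. -/
def CAlg (s : Set M) (_h : ∀ a ∈ s, ∀ b ∈ s, a * b = b * a) : Type _ :=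
  ↥(Algebra.adjoin ℂ s)

variable {s : Set M} (h : ∀ a ∈ s, ∀ b ∈ s, a * b = b * a)

instance : CommRing (CAlg s h) := Algebra.adjoinCommRingOfComm ℂ h

instance : Algebra ℂ (CAlg s h) := inferInstanceAs (Algebra ℂ ↥(Algebra.adjoin ℂ s))

instance : @Module ℂ (CAlg s h) _ (AddCommGroup.toAddCommMonoid) := Algebra.toModule

/-- Build an element of `CAlg`. -/
def CAlg.mk (x : M) (hx : x ∈ Algebra.adjoin ℂ s) : CAlg s h := ⟨x, hx⟩

/-- The inclusion of `CAlg` into the ambient algebra. -/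
def CAlg.val : CAlg s h →ₐ[ℂ] M := Subalgebra.val _

@[simp] lemma CAlg.val_mk (x : M) (hx : x ∈ Algebra.adjoin ℂ s) :
    CAlg.val h (CAlg.mk h x hx) = x := rfl

lemma CAlg.val_injective : Function.Injective (CAlg.val h) := Subtype.val_injective

instance [FiniteDimensional ℂ M] : FiniteDimensional ℂ (CAlg s h) :=
  inferInstanceAs (FiniteDimensional ℂ ↥(Algebra.adjoin ℂ s))

end CAlg

end Stmt3Aux


set_option synthInstance.maxHeartbeats 1000000 in
set_option maxHeartbeats 4000000 in
/-- Let `p ∈ ℂ[s]` be nonzero with `p, s^{N_q}` coprime (`N_q = 0` or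
`p(0) ≠ 0`), and let `S ∈ Mₙ(ℂ)((x))` be invertible with pairwise commuting
coefficients and `S^{N_q}·(dS/dx) = p(S)`.  If there is an `f ∈ ℂ((x))` of order `0`
(nonzero, of order `0`) such that every coefficient of `S − f·1ₙ` is nilpotent, then
`S` and `S⁻¹` have no negative-degree coefficients; consequently neither does `u(S)`
for any Laurent polynomial `u ∈ ℂ[s,s⁻¹]`. -/
theorem stmt_3 (n : ℕ) (hn : 0 < n) (p : Polynomial ℂ) (hp : p ≠ 0) (N_q : ℕ)
    (hco : N_q = 0 ∨ p.coeff 0 ≠ 0)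
    (S : LaurentSeries (Matrix (Fin n) (Fin n) ℂ)) (hU : IsUnit S)
    (hcomm : ∀ i j : ℤ, Commute (S.coeff i) (S.coeff j))
    (hode : S ^ N_q * lsDeriv S = Polynomial.aeval S p)
    (f : LaurentSeries ℂ) (hf : f ≠ 0) (hord : f.order = 0)
    (hnil : ∀ k : ℤ, IsNilpotent (S.coeff k - f.coeff k • (1 : Matrix (Fin n) (Fin n) ℂ))) :
    (∀ k : ℤ, k < 0 → S.coeff k = 0) ∧
    (∀ k : ℤ, k < 0 → ((↑(hU.unit⁻¹) : LaurentSeries (Matrix (Fin n) (Fin n) ℂ)).coeff k = 0)) ∧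
    (∀ u : LaurentPolynomial ℂ, ∀ k : ℤ, k < 0 → (evalLP u hU.unit).coeff k = 0) := by
  classical
  -- basic facts about f
  have hf0 : f.coeff 0 ≠ 0 := by
    have := HahnSeries.coeff_order_eq_zero.not.mpr hf
    rwa [hord] at this
  have hfneg : ∀ k < (0:ℤ), f.coeff k = 0 := fun k hk =>
    HahnSeries.coeff_eq_zero_of_lt_order (by rw [hord]; exact hk)
  -- the commutative algebra generated by the coefficients of S
  have hcomm' : ∀ a ∈ Set.range S.coeff, ∀ b ∈ Set.range S.coeff, a * b = b * a := by
    rintro a ⟨i, rfl⟩ b ⟨j, rfl⟩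
    exact hcomm i j
  set K := Stmt3Aux.CAlg (Set.range S.coeff) hcomm' with hKdef
  have hmemT : ∀ k, S.coeff k ∈ Algebra.adjoin ℂ (Set.range S.coeff) :=
    fun k => Algebra.subset_adjoin ⟨k, rfl⟩
  set V : K →ₐ[ℂ] (Matrix (Fin n) (Fin n) ℂ) := Stmt3Aux.CAlg.val hcomm' with hVdef
  have hVinj : Function.Injective V.toRingHom := Stmt3Aux.CAlg.val_injective hcomm'
  have hTpwo : (Function.support fun k : ℤ =>
      Stmt3Aux.CAlg.mk hcomm' (S.coeff k) (hmemT k)).IsPWO := by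
    refine S.isPWO_support.mono fun k hk => ?_
    simp only [Function.mem_support] at hk ⊢
    intro hzero
    apply hk
    apply hVinj
    rw [map_zero]
    exact hzero
  set T : LaurentSeries K := ⟨fun k => Stmt3Aux.CAlg.mk hcomm' (S.coeff k) (hmemT k), hTpwo⟩
    with hTdef
  have hmapT : Stmt3Aux.mapRH V.toRingHom T = S := by
    ext k
    rfl
  have hTode : T ^ N_q * lsDeriv T = Polynomial.aeval T p := by
    apply Stmt3Aux.mapRH_injective V.toRingHom hVinj
    rw [map_mul, map_pow, Stmt3Aux.mapRH_lsDeriv, Stmt3Aux.mapRH_aeval, hmapT]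
    exact hode
  -- nilpotency of the coefficients of T - f
  have hnilT : ∀ k : ℤ, (T.coeff k - algebraMap ℂ K (f.coeff k)) ∈ nilradical K := by
    intro k
    rw [mem_nilradical]
    obtain ⟨d, hd⟩ := hnil k
    refine ⟨d, ?_⟩
    apply hVinj
    rw [map_pow, map_zero, map_sub]
    have h1 : V.toRingHom (T.coeff k) = S.coeff k := rfl
    have h2 : V.toRingHom (algebraMap ℂ K (f.coeff k))
        = f.coeff k • (1 : Matrix (Fin n) (Fin n) ℂ) := by
      rw [show (V.toRingHom (algebraMap ℂ K (f.coeff k)) : Matrix (Fin n) (Fin n) ℂ)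
          = algebraMap ℂ (Matrix (Fin n) (Fin n) ℂ) (f.coeff k) from V.commutes (f.coeff k),
        Algebra.algebraMap_eq_smul_one]
    rw [h1, h2]
    exact hd
  haveI : IsNoetherianRing K := isNoetherian_of_tower ℂ (IsNoetherian.iff_fg.mpr inferInstance)
  obtain ⟨dJ, hdJ⟩ := IsNoetherianRing.isNilpotent_nilradical K
  set J := nilradical K with hJdef
  -- the main induction, successively killing negative coefficients mod powers of J
  have hind : ∀ d : ℕ, ∀ j : ℤ, j < 0 → T.coeff j ∈ J ^ (d + 1) := by
    intro d
    induction d with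
    | zero =>
      intro j hj
      have h0 := hnilT j
      rw [hfneg j hj, map_zero, sub_zero] at h0
      simpa [pow_one] using h0
    | succ d ih =>
      have hEpwo : (Function.support fun j : ℤ =>
          if j < 0 then T.coeff j else 0).IsPWO := by
        refine T.isPWO_support.mono fun k hk => ?_
        simp only [Function.mem_support] at hk ⊢
        intro h
        apply hk
        split
        · exact h
        · rfl
      set E : LaurentSeries K := ⟨fun j => if j < 0 then T.coeff j else 0, hEpwo⟩
        with hEdef
      have hEco : ∀ j : ℤ, E.coeff j = if j < 0 then T.coeff j else 0 := fun _ => rfl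
      have hps : J ^ (d + 2) = J ^ (d + 1) * J := pow_succ J (d + 1)
      have hkey := Stmt3Aux.key p N_q (T - E) E (f.coeff 0) hf0 ?hGnn J (J ^ (d + 2))
        ?hG0 ?hE0 ?hEL ?hEE ?hode2
      case hGnn =>
        intro k hk
        rw [HahnSeries.coeff_sub, hEco, if_pos hk, sub_self]
      case hG0 =>
        have h0 := hnilT 0
        rw [HahnSeries.coeff_sub, hEco, if_neg (lt_irrefl 0), sub_zero]
        exact h0
      case hE0 =>
        intro k hk
        rw [hEco, if_neg (not_lt.mpr hk)]
      case hEL =>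
        intro k b hb
        rw [hEco]
        split
        · next h =>
          rw [hps]
          exact Ideal.mul_mem_mul (ih k h) hb
        · rw [zero_mul]
          exact Ideal.zero_mem _
      case hEE =>
        intro k l
        rw [hEco, hEco]
        split
        · split
          · next hk hl =>
            have hle : J ^ (d + 1) * J ^ (d + 1) ≤ J ^ (d + 2) := by
              rw [← pow_add]
              exact Ideal.pow_le_pow_right (by omega)
            exact hle (Ideal.mul_mem_mul (ih _ hk) (ih _ hl))
          · rw [mul_zero]
            exact Ideal.zero_mem _
        · rw [zero_mul]
          exact Ideal.zero_mem _
      case hode2 =>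
        rw [sub_add_cancel]
        exact hTode
      intro j hj
      have := hkey j
      rwa [hEco, if_pos hj] at this
  -- PART 1
  have hSneg : ∀ k : ℤ, k < 0 → S.coeff k = 0 := by
    intro k hk
    have h1 := hind dJ k hk
    have h2 : J ^ (dJ + 1) ≤ J ^ dJ := Ideal.pow_le_pow_right (by omega)
    have h3 := h2 h1
    rw [hdJ, Ideal.zero_eq_bot, Ideal.mem_bot] at h3
    have h4 := congrArg V.toRingHom h3
    rw [map_zero] at h4
    exact h4
  -- PART 2
  have hS0 : IsUnit (S.coeff 0) := by
    have hν := hnil 0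
    have hu : IsUnit ((f.coeff 0) • (1 : Matrix (Fin n) (Fin n) ℂ)) := by
      rw [← Algebra.algebraMap_eq_smul_one]
      exact (hf0.isUnit).map (algebraMap ℂ (Matrix (Fin n) (Fin n) ℂ))
    have hcomm0 : Commute (S.coeff 0 - f.coeff 0 • 1)
        ((f.coeff 0) • (1 : Matrix (Fin n) (Fin n) ℂ)) :=
      (Commute.one_right _).smul_right _
    have h5 := hν.isUnit_add_right_of_commute hu hcomm0
    have h6 : S.coeff 0 - f.coeff 0 • 1 + f.coeff 0 • (1 : Matrix (Fin n) (Fin n) ℂ)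
        = S.coeff 0 := by abel
    rwa [h6] at h5
  have hRneg : ∀ k : ℤ, k < 0 →
      ((↑(hU.unit⁻¹) : LaurentSeries (Matrix (Fin n) (Fin n) ℂ)).coeff k = 0) := by
    intro k hk
    by_contra hne0
    set Rs : LaurentSeries (Matrix (Fin n) (Fin n) ℂ) := ↑(hU.unit⁻¹) with hRdef
    have hSR : S * Rs = 1 := by
      have := hU.unit.mul_inv
      rwa [hU.unit_spec] at this
    have hne : {j : ℤ | j < 0 ∧ Rs.coeff j ≠ 0}.Nonempty := ⟨k, hk, hne0⟩
    have hsub : {j : ℤ | j < 0 ∧ Rs.coeff j ≠ 0} ⊆ Rs.support := fun j hj => hj.2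
    have hwf := Rs.isPWO_support.isWF.mono hsub
    set m := hwf.min hne with hmdef
    have hmmem : m < 0 ∧ Rs.coeff m ≠ 0 := hwf.min_mem hne
    have hbel : ∀ j < m, Rs.coeff j = 0 := by
      intro j hj
      by_contra h
      exact hwf.not_lt_min hne (⟨by omega, h⟩ : j ∈ {j : ℤ | j < 0 ∧ Rs.coeff j ≠ 0}) hj
    have h1 : (S * Rs).coeff m = S.coeff 0 * Rs.coeff m := Stmt3Aux.mul_coeff_nn hSneg hbel
    rw [hSR] at h1
    have h2 : (1 : LaurentSeries (Matrix (Fin n) (Fin n) ℂ)).coeff m = 0 := by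
      rw [HahnSeries.coeff_one, if_neg hmmem.1.ne]
    rw [h2] at h1
    exact hmmem.2 ((hS0.mul_right_eq_zero).mp h1.symm)
  -- PART 3
  have hmemz : ∀ z : ℤ,
      ((hU.unit ^ z : (LaurentSeries (Matrix (Fin n) (Fin n) ℂ))ˣ)
        : LaurentSeries (Matrix (Fin n) (Fin n) ℂ)) ∈ Stmt3Aux.nnSub _ := by
    intro z
    cases z with
    | ofNat k =>
      have h1 : ((hU.unit ^ (Int.ofNat k) : (LaurentSeries (Matrix (Fin n) (Fin n) ℂ))ˣ)
          : LaurentSeries (Matrix (Fin n) (Fin n) ℂ)) = S ^ k := by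
        rw [Int.ofNat_eq_coe, zpow_natCast, Units.val_pow_eq_pow_val, hU.unit_spec]
      rw [h1]
      exact pow_mem (Stmt3Aux.nn_mem hSneg) k
    | negSucc k =>
      have h1 : ((hU.unit ^ (Int.negSucc k) : (LaurentSeries (Matrix (Fin n) (Fin n) ℂ))ˣ)
          : LaurentSeries (Matrix (Fin n) (Fin n) ℂ))
          = ((↑(hU.unit⁻¹) : LaurentSeries (Matrix (Fin n) (Fin n) ℂ))) ^ (k + 1) := by
        rw [zpow_negSucc, ← inv_pow, Units.val_pow_eq_pow_val]
      rw [h1]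
      exact pow_mem (Stmt3Aux.nn_mem hRneg) (k + 1)
  refine ⟨hSneg, hRneg, ?_⟩
  intro u k hk
  have hmem : evalLP u hU.unit ∈ Stmt3Aux.nnSub (Matrix (Fin n) (Fin n) ℂ) := by
    have h1 : evalLP u hU.unit
        = ∑ i ∈ u.coeff.support, u.coeff i • ((hU.unit ^ i : (LaurentSeries (Matrix (Fin n) (Fin n) ℂ))ˣ)
            : LaurentSeries (Matrix (Fin n) (Fin n) ℂ)) := rfl
    rw [h1]
    exact Subalgebra.sum_mem _ fun i _ => Subalgebra.smul_mem _ (hmemz i) _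
  exact hmem k hk
end

section
/- Let n ≥ 1, let p ∈ ℂ[s] be a nonzero polynomial and N_q ∈ ℕ such that p and s^{N_q} are coprime (i.e. N_q = 0 or p(0) ≠ 0). Let S ∈ Mₙ(ℂ)((x)) be invertible in Mₙ(ℂ)((x)), with pairwise commuting coefficients, satisfying S^{N_q}·(dS/dx) = p(S). Assume there exists a nonzero f ∈ ℂ((x)) of positive order such that every coefficient of S − f·1ₙ is a nilpotent matrix. Then N_q = 0, p(0) ≠ 0, the order of f equals 1, and the leading coefficient of f equals p(0). -/
attribute [-instance] HahnSeries.powerSeriesAlgebra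


noncomputable def lsMapAlgHom {k R S : Type*} [CommRing k] [Ring R] [Ring S]
    [Algebra k R] [Algebra k S] (φ : R →ₐ[k] S) :
    LaurentSeries R →ₐ[k] LaurentSeries S where
  toFun x := x.map φ
  map_one' := HahnSeries.map_one (φ.toRingHom.toMonoidWithZeroHom)
  map_mul' x y := HahnSeries.map_mul (φ : R →ₙ+* S)
  map_zero' := by ext; simp
  map_add' x y := HahnSeries.map_add (φ : R →+ S)
  commutes' r := by
    ext g
    by_cases h : g = 0 <;>
      simp [HahnSeries.algebraMap_apply, HahnSeries.C_apply, h,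
        HahnSeries.coeff_single_same, HahnSeries.coeff_single_of_ne]

@[simp] lemma lsMapAlgHom_coeff {k R S : Type*} [CommRing k] [Ring R] [Ring S]
    [Algebra k R] [Algebra k S] (φ : R →ₐ[k] S) (x : LaurentSeries R) (g : ℤ) :
    (lsMapAlgHom φ x).coeff g = φ (x.coeff g) := rfl

lemma lsMap_lsDeriv {k R S : Type*} [CommRing k] [Ring R] [Ring S]
    [Algebra k R] [Algebra k S] (φ : R →ₐ[k] S) (x : LaurentSeries R) :
    lsMapAlgHom φ (lsDeriv x) = lsDeriv (lsMapAlgHom φ x) := by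
  ext g
  show φ ((g + 1) • x.coeff (g + 1)) = (g + 1) • φ (x.coeff (g + 1))
  exact map_zsmul φ _ _

lemma lsMap_aeval {k R S : Type*} [CommRing k] [Ring R] [Ring S]
    [Algebra k R] [Algebra k S] (φ : R →ₐ[k] S) (x : LaurentSeries R) (p : Polynomial k) :
    lsMapAlgHom φ (Polynomial.aeval x p) = Polynomial.aeval (lsMapAlgHom φ x) p :=
  (Polynomial.aeval_algHom_apply (lsMapAlgHom φ) x p).symm

lemma coeff_sum {ι : Type*} (s : Finset ι) (F : ι → LaurentSeries ℂ) (k : ℤ) :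
    (∑ i ∈ s, F i).coeff k = ∑ i ∈ s, (F i).coeff k := by
  classical
  induction s using Finset.cons_induction with
  | empty => simp
  | cons a s ha ih => rw [Finset.sum_cons, Finset.sum_cons, HahnSeries.coeff_add, ih]

lemma exists_char {B : Type*} [CommRing B] [Algebra ℂ B] [Nontrivial B]
    [FiniteDimensional ℂ B] : Nonempty (B →ₐ[ℂ] ℂ) := by
  obtain ⟨m, hm⟩ := Ideal.exists_maximal B
  haveI := hm
  haveI : Module.Finite ℂ (B ⧸ m) :=
    Module.Finite.of_surjective (Ideal.Quotient.mkₐ ℂ m).toLinearMap Ideal.Quotient.mk_surjective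
  have hsurj : Function.Surjective (algebraMap ℂ (B ⧸ m)) :=
    IsAlgClosed.algebraMap_bijective_of_isIntegral.2
  have hinj : Function.Injective (algebraMap ℂ (B ⧸ m)) := (algebraMap ℂ (B ⧸ m)).injective
  let e : ℂ ≃ₐ[ℂ] (B ⧸ m) := AlgEquiv.ofBijective (Algebra.ofId ℂ (B ⧸ m)) ⟨hinj, hsurj⟩
  exact ⟨e.symm.toAlgHom.comp (Ideal.Quotient.mkₐ ℂ m)⟩

lemma le_order_of {g : LaurentSeries ℂ} (hg : g ≠ 0) {c : ℤ}
    (h : ∀ k, k < c → g.coeff k = 0) : c ≤ g.order := by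
  by_contra hlt
  push_neg at hlt
  exact hg (HahnSeries.coeff_order_eq_zero.1 (h _ hlt))

lemma scalar_case (p : Polynomial ℂ) (N_q : ℕ) (hco : N_q = 0 ∨ p.coeff 0 ≠ 0)
    (f : LaurentSeries ℂ) (hf : f ≠ 0) (hord : 0 < f.order)
    (hode : f ^ N_q * lsDeriv f = Polynomial.aeval f p) :
    N_q = 0 ∧ p.coeff 0 ≠ 0 ∧ f.order = 1 ∧ f.coeff 1 = p.coeff 0 := by
  set d := f.order with hd
  have hd1 : 1 ≤ d := hord
  have ha : f.coeff d ≠ 0 := fun h => hf (HahnSeries.coeff_order_eq_zero.1 h)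
  have hDd : (lsDeriv f).coeff (d - 1) = d • f.coeff d := by
    show (d - 1 + 1) • f.coeff (d - 1 + 1) = d • f.coeff d
    rw [sub_add_cancel]
  have hDne0 : d • f.coeff d ≠ 0 := by
    rw [zsmul_eq_mul]
    exact mul_ne_zero (Int.cast_ne_zero.2 (by omega)) ha
  have hD : lsDeriv f ≠ 0 := by
    intro h
    exact hDne0 (by rw [← hDd, h, HahnSeries.coeff_zero])
  have hDord : d - 1 ≤ (lsDeriv f).order := by
    apply le_order_of hD
    intro k hk
    show (k + 1) • f.coeff (k + 1) = 0
    rw [HahnSeries.coeff_eq_zero_of_lt_order (by omega), smul_zero]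
  have hpow0 : ∀ e : ℕ, 0 < e → ∀ k : ℤ, k < d → (f ^ e).coeff k = 0 := by
    intro e he k hk
    apply HahnSeries.coeff_eq_zero_of_lt_order
    rw [HahnSeries.order_pow, nsmul_eq_mul, ← hd]
    have h1 : (1 : ℤ) ≤ (e : ℤ) := by exact_mod_cast he
    nlinarith
  have haeval_coeff : ∀ (q : Polynomial ℂ) (k : ℤ), (Polynomial.aeval f q).coeff k =
      ∑ e ∈ Finset.range (q.natDegree + 1), q.coeff e * (f ^ e).coeff k := by
    intro q k
    rw [Polynomial.aeval_eq_sum_range, coeff_sum]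
    refine Finset.sum_congr rfl fun e _ => ?_
    rw [Algebra.smul_def, HahnSeries.algebraMap_apply, HahnSeries.C_apply,
      HahnSeries.single_zero_mul_eq_smul, HahnSeries.coeff_smul, smul_eq_mul,
      Algebra.algebraMap_self, RingHom.id_apply]
  have hRHS0 : (Polynomial.aeval f p).coeff 0 = p.coeff 0 := by
    rw [haeval_coeff]
    rw [Finset.sum_eq_single 0]
    · simp [HahnSeries.coeff_one]
    · intro e _ hne
      rw [hpow0 e (Nat.pos_of_ne_zero hne) 0 (by omega), mul_zero]
    · intro h
      exact absurd (Finset.mem_range.2 (Nat.succ_pos _)) h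
  -- Step 1 : p.coeff 0 ≠ 0
  have hp0 : p.coeff 0 ≠ 0 := by
    intro h0
    have hN : N_q = 0 := hco.resolve_right (not_not.2 h0)
    obtain ⟨q, hq⟩ := Polynomial.X_dvd_iff.2 h0
    have heq := hode
    rw [hN, pow_zero, one_mul, hq, map_mul, Polynomial.aeval_X] at heq
    have hcontr := congrArg (fun g : LaurentSeries ℂ => g.coeff (d - 1)) heq
    try simp only at hcontr
    rw [hDd] at hcontr
    apply hDne0
    rw [hcontr]
    by_cases hw : Polynomial.aeval f q = 0
    · rw [hw, mul_zero, HahnSeries.coeff_zero]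
    · have hword : 0 ≤ (Polynomial.aeval f q).order := by
        apply le_order_of hw
        intro k hk
        rw [haeval_coeff]
        apply Finset.sum_eq_zero
        intro e _
        rcases Nat.eq_zero_or_pos e with rfl | he
        · rw [pow_zero, HahnSeries.coeff_one, if_neg (by omega), mul_zero]
        · rw [hpow0 e he k (by omega), mul_zero]
      apply HahnSeries.coeff_eq_zero_of_lt_order
      rw [HahnSeries.order_mul hf hw, ← hd]
      omega
  -- Step 2 : N_q = 0
  have hN0 : N_q = 0 := by
    rcases Nat.eq_zero_or_pos N_q with h | hN
    · exact h
    exfalso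
    have h1 := congrArg (fun g : LaurentSeries ℂ => g.coeff 0) hode
    try simp only at h1
    rw [hRHS0] at h1
    apply hp0
    rw [← h1]
    apply HahnSeries.coeff_eq_zero_of_lt_order
    rw [HahnSeries.order_mul (pow_ne_zero _ hf) hD, HahnSeries.order_pow, nsmul_eq_mul, ← hd]
    have h1' : (1 : ℤ) ≤ (N_q : ℤ) := by exact_mod_cast hN
    nlinarith [hDord]
  -- Step 3
  have hode' : lsDeriv f = Polynomial.aeval f p := by
    rw [← hode, hN0, pow_zero, one_mul]
  have hc1 : f.coeff 1 = p.coeff 0 := by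
    have h1 := congrArg (fun g : LaurentSeries ℂ => g.coeff 0) hode'
    try simp only at h1
    rw [hRHS0] at h1
    rw [← h1]
    show f.coeff 1 = (0 + 1) • f.coeff (0 + 1)
    norm_num
  have hdeq : d = 1 := by
    by_contra hne
    have : f.coeff 1 = 0 := HahnSeries.coeff_eq_zero_of_lt_order (by omega)
    rw [hc1] at this
    exact hp0 this
  exact ⟨hN0, hp0, hdeq, hc1⟩

/-- Let `p ∈ ℂ[s]` be nonzero with `p, s^{N_q}` coprime (`N_q = 0` or
`p(0) ≠ 0`), and let `S ∈ Mₙ(ℂ)((x))` be invertible with pairwise commuting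
coefficients and `S^{N_q}·(dS/dx) = p(S)`.  If there is a nonzero `f ∈ ℂ((x))` of
positive order such that every coefficient of `S − f·1ₙ` is nilpotent, then `N_q = 0`,
`p(0) ≠ 0`, the order of `f` is `1`, and the leading coefficient of `f` is `p(0)`. -/
theorem stmt_4 (n : ℕ) (hn : 0 < n) (p : Polynomial ℂ) (hp : p ≠ 0) (N_q : ℕ)
    (hco : N_q = 0 ∨ p.coeff 0 ≠ 0)
    (S : LaurentSeries (Matrix (Fin n) (Fin n) ℂ)) (hU : IsUnit S)
    (hcomm : ∀ i j : ℤ, Commute (S.coeff i) (S.coeff j))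
    (hode : S ^ N_q * lsDeriv S = Polynomial.aeval S p)
    (f : LaurentSeries ℂ) (hf : f ≠ 0) (hord : 0 < f.order)
    (hnil : ∀ k : ℤ, IsNilpotent (S.coeff k - f.coeff k • (1 : Matrix (Fin n) (Fin n) ℂ))) :
    N_q = 0 ∧ p.coeff 0 ≠ 0 ∧ f.order = 1 ∧ f.coeff 1 = p.coeff 0 := by
  set M := Matrix (Fin n) (Fin n) ℂ with hM
  set A : Subalgebra ℂ M := Algebra.adjoin ℂ (Set.range S.coeff) with hA
  haveI : Nonempty (Fin n) := ⟨⟨0, hn⟩⟩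
  obtain ⟨χ⟩ : Nonempty (A →ₐ[ℂ] ℂ) := by
    letI : CommRing A := Algebra.adjoinCommRingOfComm ℂ
      (by rintro a ⟨i, rfl⟩ b ⟨j, rfl⟩; exact hcomm i j)
    haveI : Nontrivial A := ⟨1, 0, fun h => one_ne_zero (congrArg Subtype.val h : (1 : M) = 0)⟩
    haveI : FiniteDimensional ℂ A :=
      FiniteDimensional.of_injective A.val.toLinearMap Subtype.val_injective
    exact exists_char
  have hmem : ∀ k : ℤ, S.coeff k ∈ A := fun k => Algebra.subset_adjoin ⟨k, rfl⟩
  let T : LaurentSeries A :=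
    { coeff := fun k => ⟨S.coeff k, hmem k⟩
      isPWO_support' := S.isPWO_support.mono (by
        intro k hk
        simp only [Function.mem_support] at hk ⊢
        exact fun h => hk (Subtype.ext h)) }
  have hTcoeff : ∀ k : ℤ, (T.coeff k : M) = S.coeff k := fun _ => rfl
  have hST : lsMapAlgHom A.val T = S := by
    ext k
    rfl
  have hΦinj : Function.Injective (lsMapAlgHom (k := ℂ) A.val) := by
    intro x y h
    exact HahnSeries.ext (funext fun k =>
      Subtype.val_injective (congrArg (fun z : LaurentSeries M => z.coeff k) h))
  have hodeT : T ^ N_q * lsDeriv T = Polynomial.aeval T p := by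
    apply hΦinj
    rw [map_mul, map_pow, lsMap_lsDeriv, hST, hode, lsMap_aeval, hST]
  have hgf : lsMapAlgHom χ T = f := by
    ext k
    show χ (T.coeff k) = f.coeff k
    have hnilA : IsNilpotent (T.coeff k - algebraMap ℂ A (f.coeff k)) := by
      obtain ⟨m, hm⟩ := hnil k
      refine ⟨m, Subtype.val_injective ?_⟩
      have : (A.val) ((T.coeff k - algebraMap ℂ A (f.coeff k)) ^ m) = 0 := by
        rw [map_pow, map_sub, AlgHom.commutes]
        rw [Algebra.algebraMap_eq_smul_one]
        exact hm
      simpa using this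
    have hχ : χ (T.coeff k - algebraMap ℂ A (f.coeff k)) = 0 :=
      isNilpotent_iff_eq_zero.1 (hnilA.map χ)
    rw [map_sub, AlgHom.commutes] at hχ
    have : algebraMap ℂ ℂ (f.coeff k) = f.coeff k := rfl
    rw [this] at hχ
    exact sub_eq_zero.1 hχ
  have hodef : f ^ N_q * lsDeriv f = Polynomial.aeval f p := by
    have h := congrArg (lsMapAlgHom χ) hodeT
    rw [map_mul, map_pow, lsMap_lsDeriv, lsMap_aeval, hgf] at h
    exact h
  exact scalar_case p N_q hco f hf hord hodef
end

section
/- Let p ∈ ℂ[s] be a polynomial with p(0) ≠ 0 and let n ≥ 1. Let J_n ∈ Mₙ(ℂ) be the nilpotent Jordan block (entries 1 on the superdiagonal, 0 elsewhere). Then there exists a unique S ∈ Mₙ(ℂ)[[x]] with constant coefficient J_n satisfying dS/dx = p(S). Moreover, every coefficient of S lies in the unital subalgebra ℂ[J_n] of Mₙ(ℂ) generated by J_n (in particular the coefficients of S pairwise commute), S is invertible in Mₙ(ℂ)((x)), and the image of S under the coefficientwise application of the ℂ-algebra homomorphism ℂ[J_n] → ℂ sending J_n to 0 is a power series of order 1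 with leading coefficient p(0). -/
/-- Formal derivative of a power series (over a possibly noncommutative ring). -/
noncomputable def psDeriv {A : Type*} [Ring A] (f : PowerSeries A) : PowerSeries A :=
  PowerSeries.mk fun k => (k + 1) • PowerSeries.coeff (R := A) (k + 1) f

/-- The `n × n` nilpotent Jordan block `Jₙ` (ones on the superdiagonal). -/
def jordanBlock (n : ℕ) : Matrix (Fin n) (Fin n) ℂ :=
  Matrix.of fun i j => if (i : ℕ) + 1 = (j : ℕ) then 1 else 0

namespace Stmt8Aux

open PowerSeries

variable {R : Type*} [Ring R] [Algebra ℂ R]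

lemma coeff_psDeriv (f : PowerSeries R) (k : ℕ) :
    PowerSeries.coeff (R := R) k (psDeriv f) = (k + 1) • PowerSeries.coeff (R := R) (k + 1) f := by
  simp [psDeriv]

lemma cancel₁ (k : ℕ) (x : R) : (k + 1) • ((((k : ℂ)) + 1)⁻¹ • x) = x := by
  rw [← Nat.cast_smul_eq_nsmul ℂ, smul_smul, Nat.cast_add, Nat.cast_one,
    mul_inv_cancel₀ (Nat.cast_add_one_ne_zero k), one_smul]

lemma cancel₂ (k : ℕ) (x : R) : (((k : ℂ)) + 1)⁻¹ • ((k + 1) • x) = x := by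
  rw [← Nat.cast_smul_eq_nsmul ℂ, smul_smul, Nat.cast_add, Nat.cast_one,
    inv_mul_cancel₀ (Nat.cast_add_one_ne_zero k), one_smul]

lemma coeff_pow_congr {S T : PowerSeries R} {k : ℕ}
    (h : ∀ i ≤ k, coeff (R := R) i S = coeff (R := R) i T) (m : ℕ) :
    ∀ i ≤ k, coeff (R := R) i (S ^ m) = coeff (R := R) i (T ^ m) := by
  induction m with
  | zero => intro i _; rfl
  | succ m ih =>
    intro i hi
    rw [pow_succ, pow_succ, coeff_mul, coeff_mul]
    refine Finset.sum_congr rfl ?_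
    rintro ⟨a, b⟩ hab
    rw [Finset.HasAntidiagonal.mem_antidiagonal] at hab
    rw [ih a (le_trans (by omega) hi), h b (le_trans (by omega) hi)]

lemma coeff_aeval_congr {S T : PowerSeries R} {k : ℕ}
    (h : ∀ i ≤ k, coeff (R := R) i S = coeff (R := R) i T) (p : Polynomial ℂ) :
    coeff (R := R) k (Polynomial.aeval S p) = coeff (R := R) k (Polynomial.aeval T p) := by
  rw [Polynomial.aeval_eq_sum_range (x := S), Polynomial.aeval_eq_sum_range (x := T),
    map_sum, map_sum]
  refine Finset.sum_congr rfl fun m _ => ?_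
  rw [coeff_smul, coeff_smul, coeff_pow_congr h m k le_rfl]

lemma coeff_pow_mem {B : Subalgebra ℂ R} {S : PowerSeries R} {k : ℕ}
    (h : ∀ i ≤ k, coeff (R := R) i S ∈ B) (m : ℕ) :
    ∀ i ≤ k, coeff (R := R) i (S ^ m) ∈ B := by
  induction m with
  | zero =>
    intro i _
    rw [pow_zero, coeff_one]
    split <;> [exact B.one_mem; exact B.zero_mem]
  | succ m ih =>
    intro i hi
    rw [pow_succ, coeff_mul]
    refine B.toSubmodule.sum_mem fun ab hab => ?_
    rw [Finset.HasAntidiagonal.mem_antidiagonal] at hab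
    exact B.mul_mem (ih ab.1 (le_trans (by omega) hi)) (h ab.2 (le_trans (by omega) hi))

lemma coeff_aeval_mem {B : Subalgebra ℂ R} {S : PowerSeries R} {k : ℕ}
    (h : ∀ i ≤ k, coeff (R := R) i S ∈ B) (p : Polynomial ℂ) :
    coeff (R := R) k (Polynomial.aeval S p) ∈ B := by
  rw [Polynomial.aeval_eq_sum_range (x := S), map_sum]
  refine B.toSubmodule.sum_mem fun m _ => ?_
  rw [coeff_smul]
  exact B.toSubmodule.smul_mem _ (coeff_pow_mem h m k le_rfl)

lemma commute_powerSeries {S T : PowerSeries R}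
    (h : ∀ i j, Commute (coeff (R := R) i S) (coeff (R := R) j T)) : Commute S T := by
  refine PowerSeries.ext fun k => ?_
  rw [coeff_mul, coeff_mul]
  conv_rhs => rw [← Finset.Nat.sum_antidiagonal_swap]
  exact Finset.sum_congr rfl fun ab _ => h ab.1 ab.2

lemma constantCoeff_aeval (S : PowerSeries R) (p : Polynomial ℂ) :
    coeff (R := R) 0 (Polynomial.aeval S p) = Polynomial.aeval (coeff (R := R) 0 S) p := by
  rw [Polynomial.aeval_eq_sum_range (x := S),
    Polynomial.aeval_eq_sum_range (x := coeff (R := R) 0 S), map_sum]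
  refine Finset.sum_congr rfl fun m _ => ?_
  rw [coeff_smul]
  congr 1
  simp only [coeff_zero_eq_constantCoeff, map_pow]

lemma jordanBlock_pow (n m : ℕ) (i j : Fin n) :
    (jordanBlock n ^ m) i j = if (i : ℕ) + m = (j : ℕ) then 1 else 0 := by
  induction m generalizing j with
  | zero => simp [Matrix.one_apply, Fin.ext_iff]
  | succ m ih =>
    have hJ : ∀ a b : Fin n, jordanBlock n a b = if (a : ℕ) + 1 = (b : ℕ) then 1 else 0 :=
      fun _ _ => rfl
    rw [pow_succ, Matrix.mul_apply]
    have hterm : ∀ b : Fin n, (jordanBlock n ^ m) i b * jordanBlock n b j =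
        if (i : ℕ) + m = (b : ℕ) then (if (b : ℕ) + 1 = (j : ℕ) then (1 : ℂ) else 0) else 0 := by
      intro b
      rw [ih, hJ, ite_mul, one_mul, zero_mul]
    simp only [hterm]
    by_cases hlt : (i : ℕ) + m < n
    · rw [Finset.sum_eq_single (⟨(i : ℕ) + m, hlt⟩ : Fin n)
        (fun b _ hb => if_neg fun hc => hb (Fin.ext hc.symm))
        (fun h => absurd (Finset.mem_univ _) h)]
      rw [if_pos rfl]
      norm_num [Nat.add_assoc]
    · rw [Finset.sum_eq_zero fun b _ => if_neg fun hc => hlt (lt_of_eq_of_lt hc b.isLt), if_neg]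
      have := j.isLt
      omega

lemma jordanBlock_pow_self (n : ℕ) : jordanBlock n ^ n = 0 := by
  ext i j
  rw [jordanBlock_pow, Matrix.zero_apply, if_neg (by omega)]

noncomputable def solC (n : ℕ) (p : Polynomial ℂ) : ℕ → Matrix (Fin n) (Fin n) ℂ
  | 0 => jordanBlock n
  | k + 1 => (((k : ℂ)) + 1)⁻¹ •
      (PowerSeries.coeff k (Polynomial.aeval
        (PowerSeries.mk fun i => if _ : i ≤ k then solC n p i else 0) p))
  decreasing_by exact Nat.lt_succ_of_le ‹_›

end Stmt8Aux

namespace Stmt8Aux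

open PowerSeries

lemma solC_zero (n : ℕ) (p : Polynomial ℂ) : solC n p 0 = jordanBlock n := by
  rw [solC]

lemma solC_succ (n : ℕ) (p : Polynomial ℂ) (k : ℕ) :
    solC n p (k + 1) = (((k : ℂ)) + 1)⁻¹ •
      (PowerSeries.coeff k (Polynomial.aeval
        (PowerSeries.mk fun i => if _ : i ≤ k then solC n p i else 0) p)) := by
  rw [solC]

lemma trunc_agree (n : ℕ) (p : Polynomial ℂ) (k : ℕ) :
    ∀ i ≤ k, PowerSeries.coeff i (PowerSeries.mk fun i => if _ : i ≤ k then solC n p i else 0)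
      = PowerSeries.coeff i (PowerSeries.mk (solC n p)) := by
  intro i hi
  rw [coeff_mk, coeff_mk, dif_pos hi]

lemma solC_succ' (n : ℕ) (p : Polynomial ℂ) (k : ℕ) :
    solC n p (k + 1) = (((k : ℂ)) + 1)⁻¹ •
      (PowerSeries.coeff k (Polynomial.aeval (PowerSeries.mk (solC n p)) p)) := by
  rw [solC_succ, coeff_aeval_congr (trunc_agree n p k) p]

end Stmt8Aux

open Stmt8Aux

/-- Let `p ∈ ℂ[s]` with `p(0) ≠ 0` and `n ≥ 1`.  There is a unique
`S ∈ Mₙ(ℂ)[[x]]` with constant coefficient `Jₙ` satisfying `dS/dx = p(S)`.  Moreover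
every coefficient of `S` lies in the unital subalgebra `ℂ[Jₙ]` (in particular the
coefficients pairwise commute), `S` is invertible in `Mₙ(ℂ)((x))`, and the image of
`S` under the coefficientwise homomorphism `ℂ[Jₙ] → ℂ`, `Jₙ ↦ 0` (equivalently, the
unique scalar series `g` whose difference from `S` has all coefficients nilpotent)
has order `1` and leading coefficient `p(0)`. -/
theorem stmt_8 (n : ℕ) (hn : 0 < n) (p : Polynomial ℂ) (hp : p.coeff 0 ≠ 0) :
    (∃! S : PowerSeries (Matrix (Fin n) (Fin n) ℂ),
        PowerSeries.constantCoeff (R := Matrix (Fin n) (Fin n) ℂ) S = jordanBlock n ∧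
        psDeriv S = Polynomial.aeval S p) ∧
    (∀ S : PowerSeries (Matrix (Fin n) (Fin n) ℂ),
        (PowerSeries.constantCoeff (R := Matrix (Fin n) (Fin n) ℂ) S = jordanBlock n ∧
          psDeriv S = Polynomial.aeval S p) →
      (∀ k : ℕ, PowerSeries.coeff (R := (Matrix (Fin n) (Fin n) ℂ)) k S ∈
          Algebra.adjoin ℂ ({jordanBlock n} : Set (Matrix (Fin n) (Fin n) ℂ))) ∧
      (∀ i j : ℕ, Commute (PowerSeries.coeff (R := (Matrix (Fin n) (Fin n) ℂ)) i S)
          (PowerSeries.coeff (R := (Matrix (Fin n) (Fin n) ℂ)) j S)) ∧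
      IsUnit (HahnSeries.ofPowerSeries ℤ (Matrix (Fin n) (Fin n) ℂ) S) ∧
      (∃! g : PowerSeries ℂ,
          ∀ k : ℕ, IsNilpotent (PowerSeries.coeff (R := (Matrix (Fin n) (Fin n) ℂ)) k S -
            PowerSeries.coeff (R := ℂ) k g • (1 : Matrix (Fin n) (Fin n) ℂ))) ∧
      (∀ g : PowerSeries ℂ,
          (∀ k : ℕ, IsNilpotent (PowerSeries.coeff (R := (Matrix (Fin n) (Fin n) ℂ)) k S -
            PowerSeries.coeff (R := ℂ) k g • (1 : Matrix (Fin n) (Fin n) ℂ))) →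
          g.order = 1 ∧ PowerSeries.coeff (R := ℂ) 1 g = p.coeff 0)) := by
  classical
  have hJn : jordanBlock n ^ n = 0 := Stmt8Aux.jordanBlock_pow_self n
  have hPmk : PowerSeries.constantCoeff (PowerSeries.mk (solC n p)) = jordanBlock n ∧
      psDeriv (PowerSeries.mk (solC n p)) =
        Polynomial.aeval (PowerSeries.mk (solC n p)) p := by
    constructor
    · rw [← PowerSeries.coeff_zero_eq_constantCoeff_apply, PowerSeries.coeff_mk, solC_zero]
    · refine PowerSeries.ext fun k => ?_
      rw [coeff_psDeriv, PowerSeries.coeff_mk, solC_succ', cancel₁]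
  have huniq : ∀ S : PowerSeries (Matrix (Fin n) (Fin n) ℂ),
      (PowerSeries.constantCoeff S = jordanBlock n ∧ psDeriv S = Polynomial.aeval S p) →
      ∀ k, PowerSeries.coeff k S = solC n p k := by
    intro S hS k
    induction k using Nat.strong_induction_on with
    | _ k ih =>
      rcases k with _ | k
      · rw [PowerSeries.coeff_zero_eq_constantCoeff_apply, hS.1, solC_zero]
      · have h1 : (k + 1) • PowerSeries.coeff (k + 1) S =
            PowerSeries.coeff k (Polynomial.aeval S p) := by
          rw [← coeff_psDeriv, hS.2]
        have h2 : PowerSeries.coeff k (Polynomial.aeval S p)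
            = PowerSeries.coeff k (Polynomial.aeval (PowerSeries.mk (solC n p)) p) :=
          coeff_aeval_congr
            (fun i hi => by rw [PowerSeries.coeff_mk]; exact ih i (Nat.lt_succ_of_le hi)) p
        have h3 := congrArg (fun z => (((k : ℂ)) + 1)⁻¹ • z) h1
        rw [cancel₂] at h3
        rw [h3, h2, ← solC_succ']
  refine ⟨⟨PowerSeries.mk (solC n p), hPmk, fun S hS =>
    PowerSeries.ext fun k => by rw [huniq S hS k, PowerSeries.coeff_mk]⟩, ?_⟩
  intro S hS
  have h0 : PowerSeries.coeff 0 S = jordanBlock n := by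
    rw [PowerSeries.coeff_zero_eq_constantCoeff_apply, hS.1]
  have hrec : ∀ k, PowerSeries.coeff (k + 1) S =
      (((k : ℂ)) + 1)⁻¹ • PowerSeries.coeff k (Polynomial.aeval S p) := by
    intro k
    have h1 : (k + 1) • PowerSeries.coeff (k + 1) S =
        PowerSeries.coeff k (Polynomial.aeval S p) := by
      rw [← coeff_psDeriv, hS.2]
    rw [← h1, cancel₂]
  have hJB : jordanBlock n ∈ Algebra.adjoin ℂ ({jordanBlock n} : Set (Matrix (Fin n) (Fin n) ℂ)) :=
    Algebra.subset_adjoin (Set.mem_singleton _)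
  have hmem : ∀ k, PowerSeries.coeff k S ∈
      Algebra.adjoin ℂ ({jordanBlock n} : Set (Matrix (Fin n) (Fin n) ℂ)) := by
    intro k
    induction k using Nat.strong_induction_on with
    | _ k ih =>
      rcases k with _ | k
      · rw [h0]; exact hJB
      · rw [hrec k]
        exact Subalgebra.smul_mem _ (coeff_aeval_mem (fun i hi => ih i (Nat.lt_succ_of_le hi)) p) _
  have hBcomm : ∀ a ∈ Algebra.adjoin ℂ ({jordanBlock n} : Set (Matrix (Fin n) (Fin n) ℂ)),
      ∀ b ∈ Algebra.adjoin ℂ ({jordanBlock n} : Set (Matrix (Fin n) (Fin n) ℂ)), Commute a b := by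
    intro a ha b hb
    rw [Algebra.adjoin_singleton_eq_range_aeval] at ha hb
    obtain ⟨f, rfl⟩ := ha
    obtain ⟨g, rfl⟩ := hb
    show _ * _ = _ * _
    rw [← map_mul, ← map_mul, mul_comm]
  have hkey : ∀ q : Polynomial ℂ, ∃ b, Commute (jordanBlock n) b ∧
      (b ∈ Algebra.adjoin ℂ ({jordanBlock n} : Set (Matrix (Fin n) (Fin n) ℂ))) ∧
      Polynomial.aeval (jordanBlock n) q =
        q.coeff 0 • (1 : Matrix (Fin n) (Fin n) ℂ) + jordanBlock n * b := by
    intro q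
    refine ⟨Polynomial.aeval (jordanBlock n) q.divX, ?_, ?_, ?_⟩
    · simpa using (Commute.all Polynomial.X q.divX).map (Polynomial.aeval (jordanBlock n))
    · rw [Algebra.adjoin_singleton_eq_range_aeval]; exact ⟨q.divX, rfl⟩
    · conv_lhs => rw [← Polynomial.X_mul_divX_add q]
      rw [map_add, map_mul, Polynomial.aeval_X, Polynomial.aeval_C,
        Algebra.algebraMap_eq_smul_one, add_comm]
  have hnilJmul : ∀ b, Commute (jordanBlock n) b → IsNilpotent (jordanBlock n * b) :=
    fun b hb => ⟨n, by rw [hb.mul_pow, hJn, zero_mul]⟩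
  have huniqα : ∀ (a : Matrix (Fin n) (Fin n) ℂ) (α β : ℂ),
      IsNilpotent (a - α • 1) → IsNilpotent (a - β • 1) → α = β := by
    intro a α β h1 h2
    have hc : Commute (a - α • 1) (a - β • 1) := by
      have c1 : Commute a ((β : ℂ) • (1 : Matrix (Fin n) (Fin n) ℂ)) :=
        (Commute.one_right a).smul_right β
      have c2 : Commute ((α : ℂ) • (1 : Matrix (Fin n) (Fin n) ℂ)) (a - β • 1) :=
        ((Commute.one_left a).smul_left α).sub_right
          (((Commute.refl (1 : Matrix (Fin n) (Fin n) ℂ)).smul_left α).smul_right β)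
      exact ((Commute.refl a).sub_right c1).sub_left c2
    have h3 : IsNilpotent ((β - α) • (1 : Matrix (Fin n) (Fin n) ℂ)) := by
      have h4 := hc.isNilpotent_sub h1 h2
      rwa [sub_sub_sub_cancel_left, ← sub_smul] at h4
    obtain ⟨m, hm⟩ := h3
    rw [smul_pow, one_pow] at hm
    have hval := congrFun (congrFun hm ⟨0, hn⟩) ⟨0, hn⟩
    simp only [Matrix.smul_apply, Matrix.one_apply_eq, smul_eq_mul, mul_one,
      Matrix.zero_apply] at hval
    have h5 := pow_eq_zero_iff'.mp hval
    have h6 := sub_eq_zero.mp h5.1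
    exact h6.symm
  have hdec : ∀ a ∈ Algebra.adjoin ℂ ({jordanBlock n} : Set (Matrix (Fin n) (Fin n) ℂ)),
      ∃ α : ℂ, ∃ b, Commute (jordanBlock n) b ∧ a = α • 1 + jordanBlock n * b := by
    intro a ha
    rw [Algebra.adjoin_singleton_eq_range_aeval] at ha
    obtain ⟨q, rfl⟩ := ha
    obtain ⟨b, hb1, _, hb3⟩ := hkey q
    exact ⟨q.coeff 0, b, hb1, hb3⟩
  choose α bfun hcb habs using fun k => hdec _ (hmem k)
  have hnilk : ∀ k, IsNilpotent (PowerSeries.coeff k S - α k • 1) := by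
    intro k
    rw [habs k, add_sub_cancel_left]
    exact hnilJmul _ (hcb k)
  have coeff1 : PowerSeries.coeff 1 S = Polynomial.aeval (jordanBlock n) p := by
    have h1 := hrec 0
    rw [constantCoeff_aeval, h0] at h1
    simpa using h1
  have hcoeff1unit : IsUnit (PowerSeries.coeff 1 S) := by
    obtain ⟨b, hb1, _, hb3⟩ := hkey p
    rw [coeff1, hb3]
    refine (hnilJmul b hb1).isUnit_add_left_of_commute ?_ ?_
    · have h1 : IsUnit (algebraMap ℂ (Matrix (Fin n) (Fin n) ℂ) (p.coeff 0)) :=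
        (isUnit_iff_ne_zero.mpr hp).map _
      rwa [Algebra.algebraMap_eq_smul_one] at h1
    · exact (Commute.one_right _).smul_right _
  have hSW : S = PowerSeries.C (jordanBlock n) +
      PowerSeries.X * PowerSeries.mk (fun k => PowerSeries.coeff (k + 1) S) := by
    refine PowerSeries.ext fun k => ?_
    rcases k with _ | k
    · simp only [map_add, PowerSeries.coeff_zero_eq_constantCoeff_apply, map_mul,
        PowerSeries.constantCoeff_X, zero_mul, add_zero, PowerSeries.constantCoeff_C, h0]
    · rw [map_add, PowerSeries.coeff_C, PowerSeries.coeff_succ_X_mul, PowerSeries.coeff_mk,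
        if_neg (Nat.succ_ne_zero k), zero_add]
  have hXunit : IsUnit (HahnSeries.single (1 : ℤ) (1 : Matrix (Fin n) (Fin n) ℂ)) := by
    refine ⟨⟨_, HahnSeries.single (-1 : ℤ) 1, ?_, ?_⟩, rfl⟩
    · rw [HahnSeries.single_mul_single, one_mul, add_neg_cancel, HahnSeries.single_zero_one]
    · rw [HahnSeries.single_mul_single, one_mul, neg_add_cancel, HahnSeries.single_zero_one]
  have hWunit : IsUnit (PowerSeries.mk (fun k => PowerSeries.coeff (k + 1) S)) := by
    refine PowerSeries.isUnit_iff_constantCoeff.mpr ?_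
    rw [← PowerSeries.coeff_zero_eq_constantCoeff_apply, PowerSeries.coeff_mk]
    exact hcoeff1unit
  have hCnil : IsNilpotent ((HahnSeries.ofPowerSeries ℤ (Matrix (Fin n) (Fin n) ℂ))
      (PowerSeries.C (jordanBlock n))) :=
    ⟨n, by rw [← map_pow, ← map_pow, hJn, map_zero, map_zero]⟩
  have hcommCXW : Commute (PowerSeries.C (jordanBlock n))
      (PowerSeries.X * PowerSeries.mk (fun k => PowerSeries.coeff (k + 1) S)) := by
    refine commute_powerSeries fun i j => ?_
    rw [PowerSeries.coeff_C]
    split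
    · rcases j with _ | j
      · simp only [PowerSeries.coeff_zero_eq_constantCoeff_apply, map_mul,
          PowerSeries.constantCoeff_X, zero_mul]
        exact Commute.zero_right _
      · rw [PowerSeries.coeff_succ_X_mul, PowerSeries.coeff_mk]
        exact hBcomm _ hJB _ (hmem (j + 1))
    · exact Commute.zero_left _
  have hIsUnit : IsUnit ((HahnSeries.ofPowerSeries ℤ (Matrix (Fin n) (Fin n) ℂ)) S) := by
    rw [hSW, map_add]
    refine IsNilpotent.isUnit_add_right_of_commute hCnil ?_ ?_
    · rw [map_mul, HahnSeries.ofPowerSeries_X]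
      exact hXunit.mul (hWunit.map _)
    · exact hcommCXW.map _
  refine ⟨hmem, fun i j => hBcomm _ (hmem i) _ (hmem j), hIsUnit, ?_, ?_⟩
  · refine ⟨PowerSeries.mk α, fun k => by rw [PowerSeries.coeff_mk]; exact hnilk k, ?_⟩
    intro g' hg'
    refine PowerSeries.ext fun k => ?_
    rw [PowerSeries.coeff_mk]
    exact huniqα _ _ _ (hg' k) (hnilk k)
  · intro g hg
    have e0 : PowerSeries.coeff (R := ℂ) 0 g = 0 := by
      refine huniqα (PowerSeries.coeff 0 S) _ 0 (hg 0) ?_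
      rw [h0, zero_smul, sub_zero]
      exact ⟨n, hJn⟩
    have e1 : PowerSeries.coeff (R := ℂ) 1 g = p.coeff 0 := by
      refine huniqα (PowerSeries.coeff 1 S) _ _ (hg 1) ?_
      obtain ⟨b, hb1, _, hb3⟩ := hkey p
      rw [coeff1, hb3, add_sub_cancel_left]
      exact hnilJmul b hb1
    refine ⟨?_, e1⟩
    have horder : g.order = (1 : ℕ) :=
      PowerSeries.order_eq_nat.mpr ⟨by rw [e1]; exact hp, fun i hi => by interval_cases i; exact e0⟩
    simpa using horder
end

section
/- Let m ≥ 1, p ≥ 1 and i ∈ ℤ. Let B ∈ Mₘ(ℂ)((y)) have pairwise commuting coefficients, and let g ∈ ℂ((y)) be nonzero such that every coefficient of B − g·1ₘ is a nilpotent matrix. Suppose that the support of B^p is contained in pℤ (the coefficient of y^k in B^p vanishes unless p divides k) and that the support of g is contained in i + pℤ. Then the support of B is contained in i + pℤ (the coefficient of y^k in B vanishes unless k ≡ i mod p). -/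
open HahnSeries Finset

section MapAux
variable {A A₂ : Type*} [Semiring A] [Semiring A₂]

noncomputable def hsMapRingHom (f : A →+* A₂) : HahnSeries ℤ A →+* HahnSeries ℤ A₂ where
  toFun x := x.map f
  map_one' := HahnSeries.map_one f.toMonoidWithZeroHom
  map_mul' _ _ := HahnSeries.map_mul (f : A →ₙ+* A₂)
  map_zero' := HahnSeries.map_zero (f : ZeroHom A A₂)
  map_add' _ _ := HahnSeries.map_add (f : A →+ A₂)

lemma hsMap_coeff (f : A →+* A₂) (x : HahnSeries ℤ A) (k : ℤ) :
    (hsMapRingHom f x).coeff k = f (x.coeff k) := rfl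

end MapAux

section Aux
variable {A : Type*} [CommRing A]

lemma addAntidiag_congr {s s' t t' : Set ℤ} (hs : s.IsPWO) (ht : t.IsPWO)
    (hs' : s'.IsPWO) (ht' : t'.IsPWO) (h1 : s = s') (h2 : t = t') (a : ℤ) :
    Finset.antidiagonal hs ht a = Finset.antidiagonal hs' ht' a := by
  subst h1; subst h2; rfl

noncomputable def twist (ω : Aˣ) (x : HahnSeries ℤ A) : HahnSeries ℤ A :=
  ⟨fun k => (ω ^ k : Aˣ) * x.coeff k, by
    refine x.isPWO_support.mono fun k hk => ?_
    simp only [Function.mem_support, ne_eq] at hk ⊢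
    intro h
    exact hk (by rw [h, mul_zero])⟩

lemma twist_coeff (ω : Aˣ) (x : HahnSeries ℤ A) (k : ℤ) :
    (twist ω x).coeff k = (ω ^ k : Aˣ) * x.coeff k := rfl

lemma twist_support (ω : Aˣ) (x : HahnSeries ℤ A) : (twist ω x).support = x.support := by
  ext k
  simp only [HahnSeries.mem_support, twist_coeff]
  exact not_congr (Units.mul_right_eq_zero _)

lemma twist_one (ω : Aˣ) : twist ω (1 : HahnSeries ℤ A) = 1 := by
  ext k
  rw [twist_coeff]
  rcases eq_or_ne k 0 with rfl | hk
  · simp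
  · simp [HahnSeries.coeff_one, hk]

lemma twist_mul (ω : Aˣ) (x y : HahnSeries ℤ A) :
    twist ω (x * y) = twist ω x * twist ω y := by
  ext k
  rw [twist_coeff, HahnSeries.coeff_mul,
    HahnSeries.coeff_mul_left' x.isPWO_support (by rw [twist_support]),
    addAntidiag_congr _ _ x.isPWO_support y.isPWO_support rfl (twist_support ω y) k,
    Finset.mul_sum]
  refine Finset.sum_congr rfl fun ij hij => ?_
  rw [Finset.mem_antidiagonal] at hij
  rw [twist_coeff, twist_coeff, mul_mul_mul_comm, ← Units.val_mul, ← zpow_add, hij.2.2]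

lemma twist_pow (ω : Aˣ) (x : HahnSeries ℤ A) (n : ℕ) :
    twist ω (x ^ n) = (twist ω x) ^ n := by
  induction n with
  | zero => simpa using twist_one ω
  | succ n ih => rw [pow_succ, twist_mul, ih, pow_succ]

noncomputable def coeffIdeal (I : Ideal A) : Ideal (HahnSeries ℤ A) where
  carrier := {x | ∀ k, x.coeff k ∈ I}
  add_mem' ha hb k := by
    rw [HahnSeries.coeff_add]
    exact add_mem (ha k) (hb k)
  zero_mem' k := by simp
  smul_mem' c x hx k := by
    rw [smul_eq_mul, HahnSeries.coeff_mul]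
    exact sum_mem fun ij _ => Ideal.mul_mem_left _ _ (hx ij.2)

lemma coeffIdeal_mul_mem {I J : Ideal A} {x y : HahnSeries ℤ A}
    (hx : x ∈ coeffIdeal I) (hy : y ∈ coeffIdeal J) : x * y ∈ coeffIdeal (I * J) := by
  intro k
  rw [HahnSeries.coeff_mul]
  exact sum_mem fun ij _ => Ideal.mul_mem_mul (hx ij.1) (hy ij.2)

lemma coeffIdeal_pow_mem {I : Ideal A} {x : HahnSeries ℤ A}
    (hx : x ∈ coeffIdeal I) (n : ℕ) : x ^ (n + 1) ∈ coeffIdeal (I ^ (n + 1)) := by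
  induction n with
  | zero => simpa using hx
  | succ n ih =>
    rw [pow_succ x, pow_succ I]
    exact coeffIdeal_mul_mem ih hx

lemma kill_lemma (hA : IsNilpotent (nilradical A)) {u v z : HahnSeries ℤ A}
    (hv : IsUnit v) (hz : z ∈ coeffIdeal (nilradical A)) (h : u * (v + z) = 0) :
    u = 0 := by
  obtain ⟨n, hn⟩ := hA
  have hn1 : (nilradical A) ^ (n + 1) = ⊥ := by
    rw [pow_succ, hn, zero_mul]; rfl
  obtain ⟨v₀, rfl⟩ := hv
  set w : HahnSeries ℤ A := z * ↑v₀⁻¹ with hw_def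
  have hw : w ∈ coeffIdeal (nilradical A) := Ideal.mul_mem_right _ _ hz
  have h1 : u * ↑v₀ + u * z = 0 := by rw [← mul_add]; exact h
  have key : u = u * (-w) :=
    calc u = (u * ↑v₀) * ↑v₀⁻¹ := by rw [mul_assoc, Units.mul_inv, mul_one]
    _ = (-(u * z)) * ↑v₀⁻¹ := by rw [eq_neg_of_add_eq_zero_left h1]
    _ = u * (-w) := by rw [hw_def]; ring
  have key2 : ∀ r : ℕ, u = u * (-w) ^ r := by
    intro r
    induction r with
    | zero => simp
    | succ r ih => rw [pow_succ, ← mul_assoc, ← ih]; exact key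
  have hwn : (-w) ^ (n + 1) = 0 := by
    have hmem := coeffIdeal_pow_mem (neg_mem hw) n
    rw [hn1] at hmem
    ext k
    simpa [Ideal.mem_bot] using hmem k
  rw [key2 (n + 1), hwn, mul_zero]

/-- The main abstract lemma. -/
theorem main_aux {A : Type*} [CommRing A] (hnilrad : IsNilpotent (nilradical A))
    (p : ℕ) (hp : 0 < p) (i : ℤ) (B' G : HahnSeries ℤ A)
    (hGu : IsUnit G) (hpu : IsUnit ((p : ℕ) : A))
    (ω : Aˣ) (hωp : ω ^ p = 1)
    (hN : B' - G ∈ coeffIdeal (nilradical A))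
    (hB'p : ∀ k : ℤ, ¬ (p : ℤ) ∣ k → (B' ^ p).coeff k = 0)
    (hGsupp : ∀ k : ℤ, ¬ (p : ℤ) ∣ (k - i) → G.coeff k = 0)
    (k₀ : ℤ) (hk₀ : ¬ (p : ℤ) ∣ (k₀ - i))
    (hωk : IsUnit (((ω ^ (k₀ - i) : Aˣ) : A) - 1)) :
    B'.coeff k₀ = 0 := by
  have hω1 : ∀ l : ℤ, (p : ℤ) ∣ l → (ω ^ l : Aˣ) = 1 := by
    rintro l ⟨q, rfl⟩
    rw [zpow_mul, zpow_natCast, hωp, one_zpow]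
  set c₀ : A := ((ω ^ (-i) : Aˣ) : A) with hc₀
  set X := twist ω B' with hX
  set C' := HahnSeries.C c₀ * X with hC'
  have hC'coeff : ∀ k, C'.coeff k = ((ω ^ (k - i) : Aˣ) : A) * B'.coeff k := by
    intro k
    rw [hC', HahnSeries.C_mul_eq_smul, HahnSeries.coeff_smul, hX, twist_coeff,
      smul_eq_mul, ← mul_assoc]
    congr 1
    rw [hc₀, ← Units.val_mul, ← zpow_add, neg_add_eq_sub]
  have hXp : X ^ p = B' ^ p := by
    rw [hX, ← twist_pow]
    ext k
    rw [twist_coeff]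
    by_cases hk : (p : ℤ) ∣ k
    · rw [hω1 k hk, Units.val_one, one_mul]
    · rw [hB'p k hk, mul_zero]
  have hC'p : C' ^ p = B' ^ p := by
    rw [hC', mul_pow, hXp, ← map_pow]
    have hc : c₀ ^ p = 1 := by
      rw [hc₀, ← Units.val_pow_eq_pow_val, ← zpow_natCast (ω ^ (-i)), ← zpow_mul,
        hω1 _ ⟨-i, by ring⟩, Units.val_one]
    rw [hc, map_one, one_mul]
  have hB'nil : ∀ k, ¬ (p : ℤ) ∣ (k - i) → B'.coeff k ∈ nilradical A := by
    intro k hk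
    have h8 : B'.coeff k = (B' - G).coeff k + G.coeff k := by
      rw [HahnSeries.coeff_sub, sub_add_cancel]
    rw [h8, hGsupp k hk, add_zero]
    exact hN k
  have hu : C' - B' ∈ coeffIdeal (nilradical A) := by
    intro k
    have h4 : (C' - B').coeff k = (((ω ^ (k - i) : Aˣ) : A) - 1) * B'.coeff k := by
      rw [HahnSeries.coeff_sub, hC'coeff, sub_one_mul]
    rw [h4]
    by_cases hk : (p : ℤ) ∣ (k - i)
    · rw [hω1 _ hk, Units.val_one, sub_self, zero_mul]
      exact zero_mem _
    · exact Ideal.mul_mem_left _ _ (hB'nil k hk)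
  have hCG : C' - G ∈ coeffIdeal (nilradical A) := by
    have hrw : C' - G = (C' - B') + (B' - G) := by ring
    rw [hrw]
    exact add_mem hu hN
  set U : HahnSeries ℤ A := ∑ t ∈ Finset.range p, C' ^ t * B' ^ (p - 1 - t) with hU
  have hgeom : U * (C' - B') = 0 := by
    rw [hU, geom_sum₂_mul, hC'p, sub_self]
  set P : HahnSeries ℤ A := (p : HahnSeries ℤ A) * G ^ (p - 1) with hP
  have hz : U - P ∈ coeffIdeal (nilradical A) := by
    have hUP : U - P = ∑ t ∈ Finset.range p, (C' ^ t * B' ^ (p - 1 - t) - G ^ (p - 1)) := by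
      rw [Finset.sum_sub_distrib, hU, hP]
      congr 1
      rw [Finset.sum_const, Finset.card_range, nsmul_eq_mul]
    rw [hUP]
    refine sum_mem fun t ht => ?_
    rw [Finset.mem_range] at ht
    have hsplit : C' ^ t * B' ^ (p - 1 - t) - G ^ (p - 1) =
        (C' ^ t - G ^ t) * B' ^ (p - 1 - t) + G ^ t * (B' ^ (p - 1 - t) - G ^ (p - 1 - t)) := by
      have harith : t + (p - 1 - t) = p - 1 := by omega
      have hGG : G ^ (p - 1) = G ^ t * G ^ (p - 1 - t) := by rw [← _root_.pow_add, harith]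
      rw [hGG]; ring
    rw [hsplit]
    refine add_mem (Ideal.mul_mem_right _ _ ?_) (Ideal.mul_mem_left _ _ ?_)
    · rw [← geom_sum₂_mul C' G t]
      exact Ideal.mul_mem_left _ _ hCG
    · rw [← geom_sum₂_mul B' G (p - 1 - t)]
      exact Ideal.mul_mem_left _ _ hN
  have hPu : IsUnit P := by
    rw [hP]
    refine IsUnit.mul ?_ (IsUnit.pow _ hGu)
    have h5 : ((p : ℕ) : HahnSeries ℤ A) = HahnSeries.C ((p : ℕ) : A) := by
      rw [map_natCast]
    rw [h5]
    exact hpu.map HahnSeries.C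
  have hu0 : C' - B' = 0 := by
    refine kill_lemma hnilrad hPu hz ?_
    have h6 : P + (U - P) = U := by ring
    rw [h6, mul_comm]
    exact hgeom
  have hfac : (((ω ^ (k₀ - i) : Aˣ) : A) - 1) * B'.coeff k₀ = 0 := by
    have h7 := congrArg (fun x => HahnSeries.coeff x k₀) hu0
    simp only [HahnSeries.coeff_zero] at h7
    rw [HahnSeries.coeff_sub, hC'coeff, ← sub_one_mul] at h7
    exact h7
  obtain ⟨e, he⟩ := hωk
  calc B'.coeff k₀ = ↑e⁻¹ * (↑e * B'.coeff k₀) := by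
        rw [← mul_assoc, Units.inv_mul, one_mul]
  _ = 0 := by rw [he, hfac, mul_zero]

end Aux

/-- Instantiation of `main_aux` via an injective ring homomorphism into matrices. -/
theorem partB {n : ℕ} {A : Type} [CommRing A]
    (hnilrad : IsNilpotent (nilradical A))
    (ι : A →+* Matrix (Fin n) (Fin n) ℂ) (hι : Function.Injective ι)
    (γ : ℂ →+* A) (hγ : ∀ c, ι (γ c) = algebraMap ℂ (Matrix (Fin n) (Fin n) ℂ) c)
    (p : ℕ) (hp : 0 < p) (i : ℤ)
    (B : LaurentSeries (Matrix (Fin n) (Fin n) ℂ))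
    (B' : HahnSeries ℤ A) (hB' : ∀ k, ι (B'.coeff k) = B.coeff k)
    (g : LaurentSeries ℂ) (hg : g ≠ 0)
    (hnil : ∀ k : ℤ, IsNilpotent (B.coeff k - g.coeff k • (1 : Matrix (Fin n) (Fin n) ℂ)))
    (hBp : ∀ k : ℤ, ¬ (p : ℤ) ∣ k → (B ^ p).coeff k = 0)
    (hgs : ∀ k : ℤ, ¬ (p : ℤ) ∣ (k - i) → g.coeff k = 0)
    (k₀ : ℤ) (hk₀ : ¬ (p : ℤ) ∣ (k₀ - i)) :
    B.coeff k₀ = 0 := by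
  classical
  have hΦB : hsMapRingHom ι B' = B :=
    HahnSeries.coeff_inj.mp (funext fun k => hB' k)
  -- `g` as a scalar series over `A`
  set G : HahnSeries ℤ A := hsMapRingHom γ g with hG
  have hGcoeff : ∀ k, ι (G.coeff k) = g.coeff k • (1 : Matrix (Fin n) (Fin n) ℂ) := by
    intro k
    rw [hG, hsMap_coeff, hγ, Algebra.algebraMap_eq_smul_one]
  -- the root of unity
  have hω : IsPrimitiveRoot (Complex.exp (2 * Real.pi * Complex.I / p)) p :=
    Complex.isPrimitiveRoot_exp p hp.ne'
  set ωc : ℂ := Complex.exp (2 * Real.pi * Complex.I / p) with hωc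
  set ωu : ℂˣ := Units.mk0 ωc (Complex.exp_ne_zero _) with hωu
  set ωT : Aˣ := Units.map γ.toMonoidHom ωu with hωT
  have hωT_val : ∀ l : ℤ, ((ωT ^ l : Aˣ) : A) = γ (ωc ^ l) := by
    intro l
    rw [hωT, ← map_zpow, Units.coe_map]
    show γ ((ωu ^ l : ℂˣ) : ℂ) = _
    rw [Units.val_zpow_eq_zpow_val, hωu]
    rfl
  have hωTp : ωT ^ p = 1 := by
    ext
    rw [Units.val_pow_eq_pow_val, hωT]
    show (γ ((ωu : ℂˣ) : ℂ)) ^ p = 1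
    rw [← map_pow]
    have : ((ωu : ℂˣ) : ℂ) = ωc := rfl
    rw [this, hω.pow_eq_one, map_one]
  -- hypotheses of the main lemma
  have hN : B' - G ∈ coeffIdeal (nilradical A) := by
    intro k
    rw [mem_nilradical]
    obtain ⟨r, hr⟩ := hnil k
    refine ⟨r, hι ?_⟩
    rw [map_pow, map_zero, HahnSeries.coeff_sub, map_sub, hGcoeff, hB']
    exact hr
  have hB'p : ∀ k : ℤ, ¬ (p : ℤ) ∣ k → (B' ^ p).coeff k = 0 := by
    intro k hk
    apply hι
    have h1 : ι ((B' ^ p).coeff k) = (B ^ p).coeff k := by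
      rw [← hsMap_coeff, map_pow, hΦB]
    rw [h1, hBp k hk, map_zero]
  have hGsupp : ∀ k : ℤ, ¬ (p : ℤ) ∣ (k - i) → G.coeff k = 0 := by
    intro k hk
    rw [hG, hsMap_coeff, hgs k hk, map_zero]
  have hGu : IsUnit G := (isUnit_iff_ne_zero.mpr hg).map (hsMapRingHom γ)
  have hpu : IsUnit ((p : ℕ) : A) := by
    have h2 : ((p : ℕ) : A) = γ ((p : ℕ) : ℂ) := by rw [map_natCast]
    rw [h2]
    refine (isUnit_iff_ne_zero.mpr ?_).map γ
    exact_mod_cast hp.ne'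
  have hωk : IsUnit (((ωT ^ (k₀ - i) : Aˣ) : A) - 1) := by
    rw [hωT_val, ← map_one γ, ← map_sub]
    refine (isUnit_iff_ne_zero.mpr ?_).map γ
    rw [sub_ne_zero]
    exact fun hh => hk₀ ((hω.zpow_eq_one_iff_dvd _).mp hh)
  have hB'0 : B'.coeff k₀ = 0 :=
    main_aux hnilrad p hp i B' G hGu hpu ωT hωTp hN hB'p hGsupp k₀ hk₀ hωk
  have h3 := congrArg ι hB'0
  rw [hB' k₀, map_zero] at h3
  exact h3

/-- A type synonym hiding the subalgebra instances. -/
def MyAlg {n : ℕ} (S : Subalgebra ℂ (Matrix (Fin n) (Fin n) ℂ)) : Type := S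

namespace MyAlg

variable {n : ℕ} {S : Subalgebra ℂ (Matrix (Fin n) (Fin n) ℂ)}

def mk (x : Matrix (Fin n) (Fin n) ℂ) (h : x ∈ S) : MyAlg S := ⟨x, h⟩

def val (a : MyAlg S) : Matrix (Fin n) (Fin n) ℂ := (show ↥S from a).1

lemma val_injective : Function.Injective (val (S := S)) := fun _ _ h => Subtype.ext h

end MyAlg

/-- Let `B ∈ Mₘ(ℂ)((y))` have pairwise commuting coefficients and equal
a nonzero scalar series `g` plus coefficientwise-nilpotent terms.  If the support of
`B^p` is contained in `pℤ` and the support of `g` is contained in `i + pℤ`, then the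
support of `B` is contained in `i + pℤ`. -/
theorem stmt_16 (m p : ℕ) (hm : 0 < m) (hp : 0 < p) (i : ℤ)
    (B : LaurentSeries (Matrix (Fin m) (Fin m) ℂ))
    (hcomm : ∀ k l : ℤ, Commute (B.coeff k) (B.coeff l))
    (g : LaurentSeries ℂ) (hg : g ≠ 0)
    (hnil : ∀ k : ℤ, IsNilpotent (B.coeff k - g.coeff k • (1 : Matrix (Fin m) (Fin m) ℂ)))
    (hBp : ∀ k : ℤ, ¬ (p : ℤ) ∣ k → (B ^ p).coeff k = 0)
    (hgs : ∀ k : ℤ, ¬ (p : ℤ) ∣ (k - i) → g.coeff k = 0) :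
    ∀ k : ℤ, ¬ (p : ℤ) ∣ (k - i) → B.coeff k = 0 := by
  intro k₀ hk₀
  have hscomm : ∀ a ∈ Set.range B.coeff, ∀ b ∈ Set.range B.coeff, a * b = b * a := by
    rintro a ⟨k, rfl⟩ b ⟨l, rfl⟩
    exact hcomm k l
  letI instCR : CommRing (MyAlg (Algebra.adjoin ℂ (Set.range B.coeff))) :=
    Algebra.adjoinCommRingOfComm ℂ hscomm
  have hmem : ∀ k, B.coeff k ∈ Algebra.adjoin ℂ (Set.range B.coeff) :=
    fun k => Algebra.subset_adjoin ⟨k, rfl⟩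
  -- the inclusion, as a ring hom
  let ι : MyAlg (Algebra.adjoin ℂ (Set.range B.coeff)) →+* Matrix (Fin m) (Fin m) ℂ :=
    { toFun := MyAlg.val, map_one' := rfl, map_mul' := fun _ _ => rfl,
      map_zero' := rfl, map_add' := fun _ _ => rfl }
  -- the scalar embedding
  let γ : ℂ →+* MyAlg (Algebra.adjoin ℂ (Set.range B.coeff)) :=
    { toFun := fun c => MyAlg.mk (algebraMap ℂ (Matrix (Fin m) (Fin m) ℂ) c)
        ((Algebra.adjoin ℂ (Set.range B.coeff)).algebraMap_mem c),
      map_one' := MyAlg.val_injective (by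
        show algebraMap ℂ (Matrix (Fin m) (Fin m) ℂ) 1 = _
        rw [map_one]; rfl),
      map_mul' := fun a b => MyAlg.val_injective (by
        show algebraMap ℂ (Matrix (Fin m) (Fin m) ℂ) (a * b) = _
        rw [map_mul]; rfl),
      map_zero' := MyAlg.val_injective (by
        show algebraMap ℂ (Matrix (Fin m) (Fin m) ℂ) 0 = _
        rw [map_zero]; rfl),
      map_add' := fun a b => MyAlg.val_injective (by
        show algebraMap ℂ (Matrix (Fin m) (Fin m) ℂ) (a + b) = _
        rw [map_add]; rfl) }
  -- the nilradical is nilpotent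
  letI instAlg : Algebra ℂ (MyAlg (Algebra.adjoin ℂ (Set.range B.coeff))) := γ.toAlgebra
  let ιₗ : MyAlg (Algebra.adjoin ℂ (Set.range B.coeff)) →ₗ[ℂ] Matrix (Fin m) (Fin m) ℂ :=
    { toFun := MyAlg.val, map_add' := fun _ _ => rfl,
      map_smul' := fun c x => by
        show ι (γ c * x) = c • ι x
        rw [map_mul]
        show algebraMap ℂ (Matrix (Fin m) (Fin m) ℂ) c * ι x = c • ι x
        rw [← Algebra.smul_def] }
  haveI : IsNoetherian ℂ (MyAlg (Algebra.adjoin ℂ (Set.range B.coeff))) :=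
    isNoetherian_of_injective ιₗ MyAlg.val_injective
  haveI : IsNoetherianRing (MyAlg (Algebra.adjoin ℂ (Set.range B.coeff))) :=
    isNoetherianRing_iff.mpr (isNoetherian_of_tower ℂ inferInstance)
  have hnilrad : IsNilpotent (nilradical (MyAlg (Algebra.adjoin ℂ (Set.range B.coeff)))) :=
    IsNoetherianRing.isNilpotent_nilradical _
  -- `B` as a series over the commutative ring
  let B' : HahnSeries ℤ (MyAlg (Algebra.adjoin ℂ (Set.range B.coeff))) :=
    ⟨fun k => MyAlg.mk (B.coeff k) (hmem k), by
      refine B.isPWO_support.mono fun k hk => ?_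
      simp only [Function.mem_support, ne_eq] at hk ⊢
      intro h0
      refine hk (MyAlg.val_injective ?_)
      exact h0⟩
  exact partB hnilrad ι MyAlg.val_injective γ (fun _ => rfl) p hp i B B' (fun _ => rfl)
    g hg hnil hBp hgs k₀ hk₀
end
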